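/- arXiv:2512.08468 — 12 statements merged into one kernel-verified Lean document; each statement's English description precedes it below -/
import Mathlib

section
/- For every a ∈ O, one has a² ∈ Q. -/
/-- Let `K` be a field of characteristic 2 with a valuation
`v : K → Γ ∪ {∞}` onto a linearly ordered abelian group `Γ`, valuation ring
`O = {x : v x ≥ 0}` and maximal ideal `M = {x : v x > 0}`.  Let `Q ⊆ R ⊆ O` be
subrings and `I` an ideal of `R` with `I ≠ 0` and `I ⊆ Q ∩ M`.  Assume `Q` is
dense in `O`, and assume there is a function `w : O → Γ ∪ {∞}` with:
`w a = ∞ ↔ a ∈ Q`; `w (q + a) = w a` for `q ∈ Q`, `a ∈ O`; for `a ∈ O`, `q ∈ Q`,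
if `w a + v q > 0` then `a q ∈ Q` and otherwise `w (a q) = w a + v q`; and
`a² ∈ R` whenever `a ∈ O` satisfies `v a + w a > 0`.
Then `a² ∈ Q` for every `a ∈ O`. -/
theorem square_mem_Q_of_mem_O
    {K : Type*} [Field K] [CharP K 2]
    {Γ : Type*} [AddCommGroup Γ] [LinearOrder Γ] [IsOrderedAddMonoid Γ]
    (v : K → WithTop Γ)
    (v_surj : ∀ γ : Γ, ∃ x : K, v x = (γ : WithTop Γ))
    (v_eq_top_iff : ∀ x : K, v x = ⊤ ↔ x = 0)
    (v_mul : ∀ x y : K, v (x * y) = v x + v y)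
    (v_add : ∀ x y : K, min (v x) (v y) ≤ v (x + y))
    (O Q R : Subring K)
    (hO : ∀ x : K, x ∈ O ↔ 0 ≤ v x)
    (hQR : (Q : Set K) ⊆ (R : Set K)) (hRO : (R : Set K) ⊆ (O : Set K))
    (I : Set K)
    (hIne : ∃ u ∈ I, u ≠ (0 : K))
    (hIQ : I ⊆ (Q : Set K)) (hIM : ∀ x ∈ I, 0 < v x)
    (hIzero : (0 : K) ∈ I)
    (hIadd : ∀ x ∈ I, ∀ y ∈ I, x + y ∈ I)
    (hImul : ∀ r ∈ R, ∀ x ∈ I, r * x ∈ I)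
    (hdense : ∀ a ∈ O, ∀ γ : Γ, ∃ q ∈ Q, (γ : WithTop Γ) < v (a - q))
    (w : K → WithTop Γ)
    (hw_top : ∀ a ∈ O, (w a = ⊤ ↔ a ∈ Q))
    (hw_shift : ∀ q ∈ Q, ∀ a ∈ O, w (q + a) = w a)
    (hw_mul_pos : ∀ a ∈ O, ∀ q ∈ Q, 0 < w a + v q → a * q ∈ Q)
    (hw_mul : ∀ a ∈ O, ∀ q ∈ Q, ¬ 0 < w a + v q → w (a * q) = w a + v q)
    (hw_sq : ∀ a ∈ O, 0 < v a + w a → a ^ 2 ∈ R) :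
    ∀ a ∈ O, a ^ 2 ∈ Q := by

  intro a haO
  by_cases haQ : a ∈ Q
  · exact pow_mem haQ 2
  -- pick a nonzero element of I
  obtain ⟨u, huI, hune⟩ := hIne
  have huQ : u ∈ Q := hIQ huI
  have huO : u ∈ O := hRO (hQR huQ)
  have hvu_ne : v u ≠ ⊤ := fun h => hune ((v_eq_top_iff u).mp h)
  obtain ⟨δ, hδ⟩ := WithTop.ne_top_iff_exists.mp hvu_ne
  have hδ' : v u = (δ : WithTop Γ) := hδ.symm
  have hδpos : (0 : Γ) < δ := by
    have := hIM u huI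
    rw [hδ'] at this
    exact_mod_cast this
  -- w a is finite
  have hwa_ne : w a ≠ ⊤ := fun h => haQ ((hw_top a haO).mp h)
  obtain ⟨γ₀, hγ₀⟩ := WithTop.ne_top_iff_exists.mp hwa_ne
  have hγ₀' : w a = (γ₀ : WithTop Γ) := hγ₀.symm
  -- dense approximation
  obtain ⟨q₀, hq₀Q, hq₀v⟩ := hdense a haO (max δ (δ + δ - γ₀))
  set b := a - q₀ with hb
  have hq₀O : q₀ ∈ O := hRO (hQR hq₀Q)
  have hbO : b ∈ O := O.sub_mem haO hq₀O
  have hbnQ : b ∉ Q := by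
    intro hbQ
    apply haQ
    have : a = b + q₀ := by rw [hb]; ring
    rw [this]; exact Q.add_mem hbQ hq₀Q
  have hbne : b ≠ 0 := by
    intro h
    exact hbnQ (h ▸ Q.zero_mem)
  have hvb_ne : v b ≠ ⊤ := fun h => hbne ((v_eq_top_iff b).mp h)
  obtain ⟨β, hβ⟩ := WithTop.ne_top_iff_exists.mp hvb_ne
  have hβ' : v b = (β : WithTop Γ) := hβ.symm
  have hmaxβ : max δ (δ + δ - γ₀) < β := by
    rw [hβ'] at hq₀v
    exact_mod_cast hq₀v
  have hβ1 : δ < β := lt_of_le_of_lt (le_max_left _ _) hmaxβ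
  have hβ2 : δ + δ - γ₀ < β := lt_of_le_of_lt (le_max_right _ _) hmaxβ
  -- valuation of 1 and of u⁻¹
  have hv1 : v (1 : K) = 0 := by
    have h1 : v (1 : K) ≠ ⊤ := fun h => one_ne_zero ((v_eq_top_iff 1).mp h)
    obtain ⟨c, hc⟩ := WithTop.ne_top_iff_exists.mp h1
    have := v_mul (1 : K) 1
    rw [one_mul, ← hc] at this
    have hcc : c + 0 = c + c := by
      rw [add_zero]; exact_mod_cast this
    have hc0 : c = 0 := (add_left_cancel hcc).symm
    rw [← hc, hc0]; rfl
  have hvuinv : v u⁻¹ = ((-δ : Γ) : WithTop Γ) := by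
    have h := v_mul u u⁻¹
    rw [mul_inv_cancel₀ hune, hv1, hδ'] at h
    have hne : v u⁻¹ ≠ ⊤ := by
      intro ht
      rw [ht] at h
      simp at h
    obtain ⟨c, hc⟩ := WithTop.ne_top_iff_exists.mp hne
    rw [← hc] at h ⊢
    have hdc : δ + c = 0 := by exact_mod_cast h.symm
    rw [eq_neg_of_add_eq_zero_right hdc]
  -- the element y = b / u
  set y := b * u⁻¹ with hy
  have hyu : y * u = b := by
    rw [hy]; field_simp
  have hvy : v y = ((β - δ : Γ) : WithTop Γ) := by
    rw [hy, v_mul, hβ', hvuinv, ← WithTop.coe_add, sub_eq_add_neg]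
  have hyO : y ∈ O := by
    rw [hO, hvy]
    exact_mod_cast sub_nonneg.mpr hβ1.le
  -- w b = γ₀
  have hwb : w b = (γ₀ : WithTop Γ) := by
    have h := hw_shift (-q₀) (Q.neg_mem hq₀Q) a haO
    rw [neg_add_eq_sub, ← hb] at h
    rw [h, hγ₀']
  -- compute w y
  have hnotpos : ¬ (0 < w y + v u) := by
    intro h
    have := hw_mul_pos y hyO u huQ h
    rw [hyu] at this
    exact hbnQ this
  have hwy_eq : (γ₀ : WithTop Γ) = w y + v u := by
    have := hw_mul y hyO u huQ hnotpos
    rw [hyu, hwb] at this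
    exact this
  have hwy_ne : w y ≠ ⊤ := by
    intro h
    rw [h, top_add] at hwy_eq
    exact (WithTop.coe_ne_top hwy_eq)
  obtain ⟨η, hη⟩ := WithTop.ne_top_iff_exists.mp hwy_ne
  have hη' : w y = (η : WithTop Γ) := hη.symm
  have hηδ : η + δ = γ₀ := by
    rw [hη', hδ', ← WithTop.coe_add] at hwy_eq
    exact_mod_cast hwy_eq.symm
  -- apply hw_sq to y
  have hsumΓ : (0 : Γ) < β - δ + η := by
    have h1 : δ - η < β := by
      have : δ - η = δ + δ - (η + δ) := by abel
      rw [this, hηδ]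
      exact hβ2
    have h2 : (0:Γ) < β - (δ - η) := sub_pos.mpr h1
    have h3 : β - (δ - η) = β - δ + η := by abel
    rwa [h3] at h2
  have hy2R : y ^ 2 ∈ R := by
    apply hw_sq y hyO
    rw [hvy, hη', ← WithTop.coe_add]
    exact_mod_cast hsumΓ
  have hy2O : y ^ 2 ∈ O := hRO hy2R
  have hb2 : b ^ 2 = y ^ 2 * u ^ 2 := by
    rw [hy]; field_simp
  -- conclude b² ∈ Q
  have hQb2 : b ^ 2 ∈ Q := by
    by_cases hy2Q : y ^ 2 ∈ Q
    · rw [hb2]; exact Q.mul_mem hy2Q (pow_mem huQ 2)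
    · have hy2w_ne : w (y ^ 2) ≠ ⊤ := fun h => hy2Q ((hw_top _ hy2O).mp h)
      obtain ⟨ν, hν⟩ := WithTop.ne_top_iff_exists.mp hy2w_ne
      have hν' : w (y ^ 2) = (ν : WithTop Γ) := hν.symm
      have hIy2u : y ^ 2 * u ∈ Q := hIQ (hImul _ hy2R u huI)
      have hνδ : (0 : Γ) < ν + δ := by
        by_contra hle
        have hnp : ¬ (0 < w (y ^ 2) + v u) := by
          rw [hν', hδ', ← WithTop.coe_add]
          intro h
          exact hle (by exact_mod_cast h)
        have heq := hw_mul (y ^ 2) hy2O u huQ hnp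
        have htop : w (y ^ 2 * u) = ⊤ :=
          (hw_top _ (O.mul_mem hy2O huO)).mpr hIy2u
        rw [htop, hν', hδ', ← WithTop.coe_add] at heq
        exact WithTop.coe_ne_top heq.symm
      have hpos2 : 0 < w (y ^ 2) + v (u ^ 2) := by
        have hvu2 : v (u ^ 2) = ((δ + δ : Γ) : WithTop Γ) := by
          rw [pow_two, v_mul, hδ', ← WithTop.coe_add]
        rw [hν', hvu2, ← WithTop.coe_add]
        have : (0:Γ) < ν + (δ + δ) := by
          have : ν + (δ + δ) = (ν + δ) + δ := by abel
          rw [this]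
          exact add_pos hνδ hδpos
        exact_mod_cast this
      have := hw_mul_pos (y ^ 2) hy2O (u ^ 2) (pow_mem huQ 2) hpos2
      rw [hb2]; exact this
  -- finish via the characteristic-2 identity a² = b² + q₀²
  have h2 : (2 : K) = 0 := by
    have := CharP.cast_eq_zero K 2
    exact_mod_cast this
  have key : a ^ 2 = b ^ 2 + q₀ ^ 2 := by
    rw [hb]
    linear_combination (a * q₀ - q₀ ^ 2) * h2
  rw [key]
  exact Q.add_mem hQb2 (pow_mem hq₀Q 2)
end

section
/- If in addition Q ≠ O, then K is not perfect: the Frobenius map x ↦ x² on K is not surjective. -/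
private lemma wt_pos_of_neg_lt {Γ : Type*} [AddCommGroup Γ] [LinearOrder Γ] [IsOrderedAddMonoid Γ]
    {x : WithTop Γ} {δ : Γ} (h : ((-δ : Γ) : WithTop Γ) < x) :
    0 < x + (δ : WithTop Γ) := by
  cases x with
  | top =>
      rw [WithTop.top_add]
      exact WithTop.coe_lt_top 0
  | coe t =>
      rw [← WithTop.coe_add]
      have ht : -δ < t := by exact_mod_cast h
      have : (0 : Γ) < t + δ := by
        have := add_lt_add_left ht δ
        simpa using this
      exact_mod_cast this

/-- Let `K` be a field of characteristic 2 with a valuation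
`v : K → Γ ∪ {∞}` onto a linearly ordered abelian group `Γ`, valuation ring
`O = {x : v x ≥ 0}` and maximal ideal `M = {x : v x > 0}`.  Let `Q ⊆ R ⊆ O` be
subrings and `I` an ideal of `R` with `I ≠ 0` and `I ⊆ Q ∩ M`.  Assume `Q` is
dense in `O`, and assume there is a function `w : O → Γ ∪ {∞}` with:
`w a = ∞ ↔ a ∈ Q`; `w (q + a) = w a` for `q ∈ Q`, `a ∈ O`; for `a ∈ O`, `q ∈ Q`,
if `w a + v q > 0` then `a q ∈ Q` and otherwise `w (a q) = w a + v q`; and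
`a² ∈ R` whenever `a ∈ O` satisfies `v a + w a > 0`.
If in addition `Q ≠ O`, then `K` is not perfect: Frobenius is not surjective. -/
theorem not_perfect_of_Q_ne_O
    {K : Type*} [Field K] [CharP K 2]
    {Γ : Type*} [AddCommGroup Γ] [LinearOrder Γ] [IsOrderedAddMonoid Γ]
    (v : K → WithTop Γ)
    (v_surj : ∀ γ : Γ, ∃ x : K, v x = (γ : WithTop Γ))
    (v_eq_top_iff : ∀ x : K, v x = ⊤ ↔ x = 0)
    (v_mul : ∀ x y : K, v (x * y) = v x + v y)
    (v_add : ∀ x y : K, min (v x) (v y) ≤ v (x + y))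
    (O Q R : Subring K)
    (hO : ∀ x : K, x ∈ O ↔ 0 ≤ v x)
    (hQR : (Q : Set K) ⊆ (R : Set K)) (hRO : (R : Set K) ⊆ (O : Set K))
    (I : Set K)
    (hIne : ∃ u ∈ I, u ≠ (0 : K))
    (hIQ : I ⊆ (Q : Set K)) (hIM : ∀ x ∈ I, 0 < v x)
    (hIzero : (0 : K) ∈ I)
    (hIadd : ∀ x ∈ I, ∀ y ∈ I, x + y ∈ I)
    (hImul : ∀ r ∈ R, ∀ x ∈ I, r * x ∈ I)
    (hdense : ∀ a ∈ O, ∀ γ : Γ, ∃ q ∈ Q, (γ : WithTop Γ) < v (a - q))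
    (w : K → WithTop Γ)
    (hw_top : ∀ a ∈ O, (w a = ⊤ ↔ a ∈ Q))
    (hw_shift : ∀ q ∈ Q, ∀ a ∈ O, w (q + a) = w a)
    (hw_mul_pos : ∀ a ∈ O, ∀ q ∈ Q, 0 < w a + v q → a * q ∈ Q)
    (hw_mul : ∀ a ∈ O, ∀ q ∈ Q, ¬ 0 < w a + v q → w (a * q) = w a + v q)
    (hw_sq : ∀ a ∈ O, 0 < v a + w a → a ^ 2 ∈ R)
    (hQO : (Q : Set K) ≠ (O : Set K)) :
    ¬ Function.Surjective (fun x : K => x ^ 2) := by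
  intro hsurj
  have h2 : (2 : K) = 0 := by exact_mod_cast CharP.cast_eq_zero K 2
  have hsub : ∀ x y : K, x - y = x + y := fun x y => by
    rw [sub_eq_add_neg, CharTwo.neg_eq]
  have hQO' : ∀ x : K, x ∈ Q → x ∈ O := fun x hx => hRO (hQR hx)
  -- Step A: assuming Frobenius surjective, every element of `O` lies in `R`.
  have hRall : ∀ x : K, x ∈ O → x ∈ R := by
    intro x hxO
    by_cases hxQ : x ∈ Q
    · exact hQR hxQ
    obtain ⟨d, hd⟩ := hsurj x
    simp only [] at hd
    have hvx : 0 ≤ v x := (hO x).1 hxO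
    have hvxd : v x = v d + v d := by rw [← hd, pow_two, v_mul]
    have hvd : 0 ≤ v d := by
      by_contra hlt
      push_neg at hlt
      obtain ⟨t, ht⟩ := WithTop.ne_top_iff_exists.1 (ne_top_of_lt hlt)
      rw [← ht] at hlt hvxd
      have ht0 : t < 0 := by exact_mod_cast hlt
      have h1 : (0 : Γ) ≤ t + t := by
        rw [hvxd, ← WithTop.coe_add] at hvx
        exact_mod_cast hvx
      have h2' : t + t < 0 := by
        have := add_lt_add ht0 ht0
        simpa using this
      exact absurd h1 (not_le.2 h2')
    have hdO : d ∈ O := (hO d).2 hvd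
    have hdQ : d ∉ Q := fun h => hxQ (by rw [← hd]; exact pow_mem h 2)
    obtain ⟨δ, hδ⟩ := WithTop.ne_top_iff_exists.1
      (fun h => hdQ ((hw_top d hdO).1 h))
    obtain ⟨q, hqQ, hq⟩ := hdense d hdO (-δ)
    have haO : d - q ∈ O := O.sub_mem hdO (hQO' q hqQ)
    have hwa : w (d - q) = w d := by
      rw [hsub, add_comm]; exact hw_shift q hqQ d hdO
    have hpos : 0 < v (d - q) + w (d - q) := by
      rw [hwa, ← hδ]; exact wt_pos_of_neg_lt hq
    have hsq : (d - q) ^ 2 ∈ R := hw_sq _ haO hpos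
    have hx2 : (d - q) ^ 2 + q ^ 2 = x := by
      linear_combination hd + (q ^ 2 - d * q) * h2
    rw [← hx2]
    exact R.add_mem hsq (hQR (pow_mem hqQ 2))
  -- Step B: pick `b ∈ O \ Q`, `u ∈ I` nonzero.
  have hss : (Q : Set K) ⊂ (O : Set K) :=
    (show (Q : Set K) ⊆ (O : Set K) from fun x hx => hQO' x hx).ssubset_of_ne hQO
  obtain ⟨b, hbO, hbQ⟩ := Set.exists_of_ssubset hss
  obtain ⟨β, hβ⟩ := WithTop.ne_top_iff_exists.1
    (fun h => hbQ ((hw_top b hbO).1 h))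
  obtain ⟨u, huI, hune⟩ := hIne
  have huQ : u ∈ Q := hIQ huI
  obtain ⟨μ, hμ⟩ := WithTop.ne_top_iff_exists.1
    (fun h => hune ((v_eq_top_iff u).1 h))
  set γ : Γ := max (β + μ) 0 with hγdef
  -- b' := b - q0, with w b' = β and v b' > γ
  obtain ⟨q0, hq0Q, hq0⟩ := hdense b hbO γ
  set b' := b - q0 with hb'def
  have hb'O : b' ∈ O := O.sub_mem hbO (hQO' q0 hq0Q)
  have hwb' : w b' = (β : WithTop Γ) := by
    rw [hb'def, hsub, add_comm, hw_shift q0 hq0Q b hbO, ← hβ]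
  have hb'Q : b' ∉ Q := by
    intro h
    have := (hw_top b' hb'O).2 h
    rw [hwb'] at this
    exact WithTop.coe_ne_top this
  -- q1 ∈ Q with v q1 = γ
  obtain ⟨x1, hx1⟩ := v_surj γ
  have hx1O : x1 ∈ O := (hO x1).2 (by
    rw [hx1]
    exact_mod_cast le_max_right (β + μ) 0)
  obtain ⟨q1, hq1Q, hq1⟩ := hdense x1 hx1O γ
  have hvq1 : v q1 = (γ : WithTop Γ) := by
    have h1 : (γ : WithTop Γ) ≤ v q1 := by
      have he : q1 = x1 + (x1 - q1) := by linear_combination (q1 - x1) * h2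
      rw [he]
      exact le_trans (le_min (le_of_eq hx1.symm) hq1.le) (v_add _ _)
    have h2' : v q1 ≤ (γ : WithTop Γ) := by
      by_contra hlt
      push_neg at hlt
      have he : x1 = q1 + (x1 - q1) := by ring
      have : (γ : WithTop Γ) < v x1 := by
        rw [he]
        exact lt_of_lt_of_le (lt_min hlt hq1) (v_add _ _)
      rw [hx1] at this
      exact lt_irrefl _ this
    exact le_antisymm h2' h1
  have hq1ne : q1 ≠ 0 := by
    intro h
    rw [h, (v_eq_top_iff 0).2 rfl] at hvq1
    exact WithTop.top_ne_coe hvq1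
  -- a := b' / q1
  set a := b' / q1 with hadef
  have haq : a * q1 = b' := div_mul_cancel₀ b' hq1ne
  have hvb' : (γ : WithTop Γ) < v b' := hq0
  have hva : 0 < v a := by
    by_contra hle
    push_neg at hle
    have hh : v b' = v a + v q1 := by rw [← haq, v_mul]
    have hb'le : v b' ≤ (γ : WithTop Γ) := by
      rw [hh, hvq1]
      calc v a + (γ : WithTop Γ) ≤ 0 + (γ : WithTop Γ) := add_le_add_left hle _
        _ = (γ : WithTop Γ) := zero_add _
    exact absurd hvb' (not_lt.2 hb'le)
  have haO : a ∈ O := (hO a).2 hva.le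
  by_cases hc : 0 < w a + v q1
  · exact hb'Q (haq ▸ hw_mul_pos a haO q1 hq1Q hc)
  · have hwaq : w a + v q1 = (β : WithTop Γ) := by
      rw [← hw_mul a haO q1 hq1Q hc, haq, hwb']
    have hwane : w a ≠ ⊤ := by
      intro h
      rw [h, WithTop.top_add] at hwaq
      exact WithTop.top_ne_coe hwaq
    obtain ⟨α, hα⟩ := WithTop.ne_top_iff_exists.1 hwane
    rw [← hα, hvq1, ← WithTop.coe_add] at hwaq
    have hαγ : α + γ = β := by exact_mod_cast hwaq
    have hnot : ¬ 0 < w a + v u := by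
      rw [← hα, ← hμ, ← WithTop.coe_add]
      intro hpos
      have hpos' : (0 : Γ) < α + μ := by exact_mod_cast hpos
      have hle : α + μ ≤ 0 := by
        have hγ : β + μ ≤ γ := le_max_left _ _
        have hα' : α = β - γ := eq_sub_of_add_eq hαγ
        rw [hα']
        have : β - γ + μ = β + μ - γ := by abel
        rw [this]
        exact sub_nonpos.2 hγ
      exact absurd hpos' (not_lt.2 hle)
    have hauQ : a * u ∈ Q := hIQ (hImul a (hRall a haO) u huI)
    have hfin := hw_mul a haO u huQ hnot
    rw [(hw_top (a * u) (O.mul_mem haO (hQO' u huQ))).2 hauQ,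
      ← hα, ← hμ, ← WithTop.coe_add] at hfin
    exact WithTop.top_ne_coe hfin
end

section
/- Assume p = 2 and that the pre-diffeo-valued field structure is dense. Then K is not perfect: the Frobenius map x ↦ x² on K is not surjective. -/
/-- `q : K` is algebraic over the prime field `𝔽_p`. -/
def AlgebraicOverPrime (p : ℕ) {K : Type*} [Field K] [CharP K p] (q : K) : Prop :=
  ∃ f : Polynomial (ZMod p), f ≠ 0 ∧ Polynomial.eval₂ (ZMod.castHom dvd_rfl K) q f = 0

/-- A pre-diffeo-valued field structure on a field `K` of characteristic `p`,
with value group `Γ`, residue field `k` and mock `K/M` module `D`.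
Maps defined on subrings (`res`, `d`, `π`, the scalar action of `O` on `D`) are
encoded as total functions whose behaviour is only constrained on the relevant subring. -/
structure PreDiffeoValued (p : ℕ) (K : Type*) [Field K]
    (Γ : Type*) [AddCommGroup Γ] [LinearOrder Γ] [IsOrderedAddMonoid Γ]
    (k : Type*) [Field k] (D : Type*) [AddCommGroup D] where
  /-- the valuation, with `⊤` playing the role of `∞` -/
  v : K → WithTop Γ
  v_surj : ∀ γ : Γ, ∃ x : K, v x = (γ : WithTop Γ)
  v_eq_top_iff : ∀ x : K, v x = ⊤ ↔ x = 0
  v_mul : ∀ x y : K, v (x * y) = v x + v y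
  v_add : ∀ x y : K, min (v x) (v y) ≤ v (x + y)
  /-- the valuation ring `O = {x : v x ≥ 0}` (with maximal ideal `M = {x : v x > 0}`) -/
  O : Subring K
  mem_O_iff : ∀ x : K, x ∈ O ↔ 0 ≤ v x
  /-- the residue map `O → k` -/
  res : K → k
  res_add : ∀ x ∈ O, ∀ y ∈ O, res (x + y) = res x + res y
  res_mul : ∀ x ∈ O, ∀ y ∈ O, res (x * y) = res x * res y
  res_one : res 1 = 1
  res_surjective : ∀ z : k, ∃ x ∈ O, res x = z
  res_eq_zero_iff : ∀ x ∈ O, (res x = 0 ↔ 0 < v x)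
  /-- the scalar action of `O` on `D` -/
  smul : K → D → D
  smul_add : ∀ a ∈ O, ∀ x y : D, smul a (x + y) = smul a x + smul a y
  add_smul : ∀ a ∈ O, ∀ b ∈ O, ∀ x : D, smul (a + b) x = smul a x + smul b x
  mul_smul : ∀ a ∈ O, ∀ b ∈ O, ∀ x : D, smul (a * b) x = smul a (smul b x)
  one_smul : ∀ x : D, smul 1 x = x
  /-- `D` is a divisible `O`-module -/
  divisible : ∀ a ∈ O, a ≠ 0 → ∀ y : D, ∃ x : D, smul a x = y
  /-- any two elements of `D` are comparable under the divisibility order -/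
  total : ∀ x y : D, (∃ a ∈ O, x = smul a y) ∨ (∃ a ∈ O, y = smul a x)
  /-- the `O`-module embedding of the residue field `k` into `D` -/
  phi : k → D
  phi_add : ∀ z w : k, phi (z + w) = phi z + phi w
  phi_injective : Function.Injective phi
  phi_smul : ∀ a ∈ O, ∀ z : k, phi (res a * z) = smul a (phi z)
  /-- the subring `R ⊆ O` -/
  R : Subring K
  R_le_O : (R : Set K) ⊆ (O : Set K)
  /-- the surjective derivation `d : R → k`, with `Q = ker d` -/
  d : K → k
  d_add : ∀ x ∈ R, ∀ y ∈ R, d (x + y) = d x + d y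
  d_leibniz : ∀ x ∈ R, ∀ y ∈ R, d (x * y) = res x * d y + res y * d x
  d_surjective : ∀ z : k, ∃ x ∈ R, d x = z
  /-- the surjective `Q`-module map `π : O → D` with kernel `Q` -/
  pi : K → D
  pi_add : ∀ x ∈ O, ∀ y ∈ O, pi (x + y) = pi x + pi y
  pi_qsmul : ∀ q ∈ R, d q = 0 → ∀ x ∈ O, pi (q * x) = smul q (pi x)
  pi_surjective : ∀ y : D, ∃ x ∈ O, pi x = y
  pi_eq_zero_iff : ∀ x ∈ O, (pi x = 0 ↔ x ∈ R ∧ d x = 0)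
  pi_eq_phi_d : ∀ x ∈ R, pi x = phi (d x)
  /-- in characteristic `2`, squares of elements of `O` lie in `Q` -/
  char_two_sq : p = 2 → ∀ a ∈ O, a ^ 2 ∈ R ∧ d (a ^ 2) = 0
  /-- in odd characteristic, `π` is a derivation -/
  char_odd_pi : p ≠ 2 → ∀ a ∈ O, ∀ b ∈ O, pi (a * b) = smul a (pi b) + smul b (pi a)

namespace PreDiffeoValued

variable {p : ℕ} {K : Type*} [Field K] {Γ : Type*} [AddCommGroup Γ] [LinearOrder Γ] [IsOrderedAddMonoid Γ]
  {k : Type*} [Field k] {D : Type*} [AddCommGroup D]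

/-- The constant ring `Q = ker d`, as a subset of `K`. -/
def Q (P : PreDiffeoValued p K Γ k D) : Set K := {x | x ∈ P.R ∧ P.d x = 0}

/-- The pre-diffeo-valued structure is dense: `Q` is dense in `O` for the valuation topology. -/
def IsDense (P : PreDiffeoValued p K Γ k D) : Prop :=
  ∀ a ∈ P.O, ∀ γ : Γ, ∃ q ∈ P.Q, (γ : WithTop Γ) < P.v (a - q)

end PreDiffeoValued

/-- If `p = 2` and the pre-diffeo-valued field structure on `K` is dense,
then `K` is not perfect: the Frobenius map `x ↦ x²` on `K` is not surjective. -/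
theorem not_perfect_of_dense_preDiffeoValued
    {p : ℕ} (hp : p.Prime) {K : Type*} [Field K] [CharP K p]
    {Γ : Type*} [AddCommGroup Γ] [LinearOrder Γ] [IsOrderedAddMonoid Γ]
    {k : Type*} [Field k] {D : Type*} [AddCommGroup D]
    (P : PreDiffeoValued p K Γ k D)
    (hp2 : p = 2)
    (hdense : P.IsDense) :
    ¬ Function.Surjective (fun x : K => x ^ 2) := by
  intro hsurj
  obtain ⟨x, hxR, hdx⟩ := P.d_surjective 1
  obtain ⟨y, hy⟩ := hsurj x
  simp only [] at hy
  have hxO : x ∈ P.O := P.R_le_O hxR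
  have hyO : y ∈ P.O := by
    rw [P.mem_O_iff]
    have hx : (0 : WithTop Γ) ≤ P.v x := (P.mem_O_iff x).mp hxO
    rw [← hy, pow_two, P.v_mul] at hx
    by_contra h
    push_neg at h
    set vy := P.v y with hvy
    lift vy to Γ using h.ne_top with g hg
    rw [← WithTop.coe_add] at hx
    have h' : g < 0 := WithTop.coe_lt_coe.mp h
    have : g + g < 0 := by simpa using add_lt_add h' h'
    exact absurd (WithTop.coe_le_coe.mp (le_trans (by simp) hx)) (not_le.mpr this)
  obtain ⟨_, hd0⟩ := P.char_two_sq hp2 y hyO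
  rw [hy, hdx] at hd0
  exact one_ne_zero hd0
end

section
/- For every wild α ∈ K with α ≠ 0, either α or α⁻¹ is a root of a monic quadratic polynomial over R: there exist b, c ∈ R with α² + bα + c = 0, or there exist b, c ∈ R with α⁻² + bα⁻¹ + c = 0. -/
/-- `α ∈ K` is wild with respect to the subring `R`: `α ∉ R` and `(α - q)⁻¹ ∉ R` for
every `q` in the relative algebraic closure `k₀` of `𝔽₂` in `K` with `q ≠ α`. -/
def IsWild {K : Type*} [Field K] [CharP K 2] (R : Subring K) (α : K) : Prop :=
  α ∉ R ∧ ∀ q : K, AlgebraicOverPrime 2 q → q ≠ α → (α - q)⁻¹ ∉ R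

/-- Let `K` be a field of characteristic 2, `R ⊆ K` a local subring
containing `k₀ = 𝔽₂^alg ∩ K`, with maximal ideal `𝔭`.  Assume (H1): for all
`a, b, c ∈ K` there are `x, y, z ∈ R` with `ax + by + cz = 0` and one of `x, y, z` a
unit of `R`; and (H2): for every wild `α` and `b, c ∈ R` with `α² + bα + c = 0` one has
`b ∈ 𝔭` and `c - d² ∈ 𝔭` for some `d ∈ R`.  Then every wild `α ≠ 0` satisfies: `α` or
`α⁻¹` is a root of a monic quadratic polynomial over `R`. -/
theorem wild_satisfies_monic_quadratic
    {K : Type*} [Field K] [CharP K 2]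
    (R : Subring K)
    (hk0 : ∀ q : K, AlgebraicOverPrime 2 q → q ∈ R)
    (𝔭 : Set K) (h𝔭R : 𝔭 ⊆ (R : Set K))
    (h𝔭zero : (0 : K) ∈ 𝔭)
    (h𝔭add : ∀ x ∈ 𝔭, ∀ y ∈ 𝔭, x + y ∈ 𝔭)
    (h𝔭mul : ∀ r ∈ R, ∀ x ∈ 𝔭, r * x ∈ 𝔭)
    (h𝔭one : (1 : K) ∉ 𝔭)
    (hlocal : ∀ x ∈ R, x ∉ 𝔭 → ∃ y ∈ R, x * y = 1)
    (H1 : ∀ a b c : K, ∃ x ∈ R, ∃ y ∈ R, ∃ z ∈ R,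
      a * x + b * y + c * z = 0 ∧
      ((∃ x' ∈ R, x * x' = 1) ∨ (∃ y' ∈ R, y * y' = 1) ∨ (∃ z' ∈ R, z * z' = 1)))
    (H2 : ∀ α : K, IsWild R α → ∀ b ∈ R, ∀ c ∈ R, α ^ 2 + b * α + c = 0 →
      b ∈ 𝔭 ∧ ∃ d ∈ R, c - d ^ 2 ∈ 𝔭) :
    ∀ α : K, α ≠ 0 → IsWild R α →
      (∃ b ∈ R, ∃ c ∈ R, α ^ 2 + b * α + c = 0) ∨
      (∃ b ∈ R, ∃ c ∈ R, (α⁻¹) ^ 2 + b * α⁻¹ + c = 0) := by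
  intro α hα0 hwild
  obtain ⟨hαR, hαq⟩ := hwild
  have h2 : (2 : K) = 0 := by
    have := CharP.cast_eq_zero K 2
    exact_mod_cast this
  obtain ⟨x, hx, y, hy, z, hz, heq, hunit⟩ := H1 (α ^ 2) α 1
  by_cases hxu : ∃ x' ∈ R, x * x' = 1
  · obtain ⟨x', hx', hxx'⟩ := hxu
    exact Or.inl ⟨y * x', mul_mem hy hx', z * x', mul_mem hz hx',
      by linear_combination x' * heq - α ^ 2 * hxx'⟩
  by_cases hzu : ∃ z' ∈ R, z * z' = 1
  · obtain ⟨z', hz', hzz'⟩ := hzu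
    refine Or.inr ⟨y * z', mul_mem hy hz', x * z', mul_mem hx hz', ?_⟩
    have h : α ^ 2 * ((α⁻¹) ^ 2 + (y * z') * α⁻¹ + x * z') = 0 := by
      have hinv : α * α⁻¹ = 1 := mul_inv_cancel₀ hα0
      linear_combination z' * heq - hzz' + (y * z' * α) * hinv
        + ((α * α⁻¹ + 1)) * hinv
    rcases mul_eq_zero.mp h with h' | h'
    · exact absurd h' (pow_ne_zero 2 hα0)
    · exact h'
  -- now y is a unit, x and z are in 𝔭
  obtain ⟨y', hy', hyy'⟩ := hunit.resolve_left hxu |>.resolve_right hzu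
  have hxp : x ∈ 𝔭 := by
    by_contra h; exact hxu (hlocal x hx h)
  have hzp : z ∈ 𝔭 := by
    by_contra h; exact hzu (hlocal z hz h)
  set x₁ : K := x * y' with hx₁def
  set z₁ : K := z * y' with hz₁def
  have hx₁p : x₁ ∈ 𝔭 := by
    have := h𝔭mul y' hy' x hxp; rwa [mul_comm] at this
  have hz₁p : z₁ ∈ 𝔭 := by
    have := h𝔭mul y' hy' z hzp; rwa [mul_comm] at this
  have heq1 : α ^ 2 * x₁ + α + z₁ = 0 := by
    linear_combination y' * heq - α * hyy'
  by_cases hx₁0 : x₁ = 0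
  · exfalso
    apply hαR
    have hα : α = -z₁ := by rw [hx₁0] at heq1; linear_combination heq1
    rw [hα]
    exact neg_mem (h𝔭R hz₁p)
  -- the key element β = α * x₁
  set β : K := α * x₁ with hβdef
  have hβeq : β ^ 2 + 1 * β + z₁ * x₁ = 0 := by
    linear_combination x₁ * heq1 + (β + α * x₁ + 1) * hβdef
  have hcR : z₁ * x₁ ∈ R := mul_mem (h𝔭R hz₁p) (h𝔭R hx₁p)
  have hcp : z₁ * x₁ ∈ 𝔭 := h𝔭mul z₁ (h𝔭R hz₁p) x₁ hx₁p
  -- β is not wild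
  have hβnw : ¬ IsWild R β := by
    intro hw
    exact h𝔭one (H2 β hw 1 (one_mem R) (z₁ * x₁) hcR hβeq).1
  rw [IsWild] at hβnw
  push_neg at hβnw
  -- in fact β ∈ R
  have hβR : β ∈ R := by
    by_contra hβnR
    obtain ⟨q, hqalg, hqβ, hwR⟩ := hβnw hβnR
    have hqR : q ∈ R := hk0 q hqalg
    set w : K := (β - q)⁻¹ with hwdef
    have hβq0 : β - q ≠ 0 := sub_ne_zero.mpr (Ne.symm hqβ)
    have hw0 : w ≠ 0 := inv_ne_zero hβq0
    have hwinv : (β - q) * w = 1 := by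
      rw [hwdef]; exact mul_inv_cancel₀ hβq0
    -- key identity: 1 = (q^2+q+z₁x₁) * w^2 + w
    have hkey : (1 : K) = (q ^ 2 + q + z₁ * x₁) * w ^ 2 + w := by
      linear_combination -w ^ 2 * hβeq + (β * w + q * w + w + 1) * hwinv
        + (1 + q * w) * h2
    -- hence w is a unit of R, so β = q + w' ∈ R
    have hwnp : w ∉ 𝔭 := by
      intro hwp
      apply h𝔭one
      rw [hkey]
      have hw2p : w ^ 2 ∈ 𝔭 := by rw [sq]; exact h𝔭mul w (h𝔭R hwp) w hwp
      exact h𝔭add _ (h𝔭mul _ (add_mem (add_mem (pow_mem hqR 2) hqR) hcR) _ hw2p) _ hwp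
    obtain ⟨w', hw', hww'⟩ := hlocal w hwR hwnp
    apply hβnR
    have hβval : β = q + w' := by
      linear_combination w' * hwinv - (β - q) * hww'
    rw [hβval]
    exact add_mem hqR hw'
  -- β * (β + 1) = z₁ * x₁ ∈ 𝔭, so β ∈ 𝔭 or β + 1 ∈ 𝔭
  have hprod : β * (β + 1) = z₁ * x₁ := by linear_combination hβeq - z₁ * x₁ * h2
  have hone : (1 : K) = β + (β + 1) := by linear_combination -β * h2
  have hor : β ∈ 𝔭 ∨ β + 1 ∈ 𝔭 := by
    by_contra h
    push_neg at h
    obtain ⟨μ, hμ, hμβ⟩ := hlocal β hβR h.1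
    obtain ⟨ν, hν, hνβ⟩ := hlocal (β + 1) (add_mem hβR (one_mem R)) h.2
    apply h𝔭one
    have h1 : (1 : K) = μ * ν * (z₁ * x₁) := by
      rw [← hprod]; linear_combination -((β + 1) * ν) * hμβ - hνβ
    rw [h1]
    exact h𝔭mul _ (mul_mem hμ hν) _ hcp
  rcases hor with hβp | hβ1p
  · -- β ∈ 𝔭 ⇒ β+1 unit ⇒ α ∈ R, contradiction
    exfalso
    have hβ1 : β + 1 ∉ 𝔭 := by
      intro h
      apply h𝔭one
      rw [hone]
      exact h𝔭add _ hβp _ h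
    obtain ⟨ν, hν, hνβ⟩ := hlocal (β + 1) (add_mem hβR (one_mem R)) hβ1
    apply hαR
    have hα : α = z₁ * ν := by
      have h1 : α * (β + 1) = z₁ := by
        linear_combination heq1 - z₁ * h2 + α * hβdef
      calc α = α * ((β + 1) * ν) := by rw [hνβ]; ring
        _ = (α * (β + 1)) * ν := by ring
        _ = z₁ * ν := by rw [h1]
    rw [hα]
    exact mul_mem (h𝔭R hz₁p) hν
  · -- β + 1 ∈ 𝔭 ⇒ β unit ⇒ α⁻¹ = x₁ * μ ∈ R
    have hβnp : β ∉ 𝔭 := by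
      intro h
      apply h𝔭one
      rw [hone]
      exact h𝔭add _ h _ hβ1p
    obtain ⟨μ, hμ, hμβ⟩ := hlocal β hβR hβnp
    rw [hβdef] at hμβ
    have hαinv : α⁻¹ = x₁ * μ := by
      field_simp
      linear_combination hμβ + (1 - x * y' * μ * α) * h2
    have hinvR : α⁻¹ ∈ R := by rw [hαinv]; exact mul_mem (h𝔭R hx₁p) hμ
    refine Or.inr ⟨0, zero_mem R, (α⁻¹) ^ 2, pow_mem hinvR 2, ?_⟩
    linear_combination h2 * (α⁻¹ ^ 2)
end

section
/- The integral closure O of R in K is a valuation subring of K (for every x ∈ K^×, x ∈ O or x⁻¹ ∈ O), and if M denotes the maximal ideal of O, then for every α ∈ M with α ∉ R there exist b, c ∈ R with α² + bα + c = 0. -/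
private lemma quad_integral {K : Type*} [Field K] (R : Subring K) (x b c : K)
    (hb : b ∈ R) (hc : c ∈ R) (h : x ^ 2 + b * x + c = 0) :
    x ∈ integralClosure ↥R K := by
  show IsIntegral ↥R x
  refine ⟨Polynomial.X ^ 2 + Polynomial.C ⟨b, hb⟩ * Polynomial.X + Polynomial.C ⟨c, hc⟩, ?_, ?_⟩
  · monicity!
  · simp [Polynomial.eval₂_add, Polynomial.eval₂_mul, Polynomial.eval₂_pow]
    exact h

private lemma mem_R_integral {K : Type*} [Field K] (R : Subring K) (x : K) (hx : x ∈ R) :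
    x ∈ integralClosure ↥R K :=
  (integralClosure ↥R K).algebraMap_mem ⟨x, hx⟩

/-- If `t ≠ 0` is tame, then `t ∈ R` or `t⁻¹ ∈ R`. -/
private lemma tame_lemma {K : Type*} [Field K] [CharP K 2] (R : Subring K)
    (hk0 : ∀ q : K, AlgebraicOverPrime 2 q → q ∈ R)
    (𝔭 : Set K)
    (h𝔭add : ∀ x ∈ 𝔭, ∀ y ∈ 𝔭, x + y ∈ 𝔭)
    (h𝔭mul : ∀ r ∈ R, ∀ x ∈ 𝔭, r * x ∈ 𝔭)
    (h𝔭one : (1 : K) ∉ 𝔭)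
    (hlocal : ∀ x ∈ R, x ∉ 𝔭 → ∃ y ∈ R, x * y = 1)
    (t : K) (ht : ¬ IsWild R t) : t ∈ R ∨ t⁻¹ ∈ R := by
  by_cases htR : t ∈ R
  · exact Or.inl htR
  · rw [IsWild, not_and_or] at ht
    rcases ht with ht | ht
    · exact absurd htR (not_not.mpr (not_not.mp ht))
    push_neg at ht
    obtain ⟨q, halg, hqt, hr⟩ := ht
    set r : K := (t - q)⁻¹ with hrdef
    have htq : t - q ≠ 0 := sub_ne_zero.mpr (Ne.symm hqt)
    have hrne : r ≠ 0 := inv_ne_zero htq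
    have hqR : q ∈ R := hk0 q halg
    have htr : t * r = 1 + q * r := by
      have : (t - q) * r = 1 := mul_inv_cancel₀ htq
      linear_combination this
    by_cases hr𝔭 : r ∈ 𝔭
    · -- r ∈ 𝔭 : then q*r + 1 is a unit and t⁻¹ = r * (q*r+1)⁻¹ ∈ R
      have hqr1R : 1 + q * r ∈ R := R.add_mem R.one_mem (R.mul_mem hqR hr)
      have hqr1 : (1 + q * r) ∉ 𝔭 := by
        intro hmem
        have hneg : -(q * r) ∈ 𝔭 := by
          have := h𝔭mul (-q) (R.neg_mem hqR) r hr𝔭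
          simpa [neg_mul] using this
        have : (1 : K) ∈ 𝔭 := by
          have := h𝔭add _ hmem _ hneg
          simpa using this
        exact h𝔭one this
      obtain ⟨m, hmR, hm⟩ := hlocal _ hqr1R hqr1
      right
      have : t * (r * m) = 1 := by
        rw [← mul_assoc, htr, hm]
      rw [inv_eq_of_mul_eq_one_right this]
      exact R.mul_mem hr hmR
    ·
      obtain ⟨m, hmR, hm⟩ := hlocal _ hr hr𝔭
      left
      have hminv : m = (t - q) := by
        have h1 : m = r⁻¹ := eq_inv_of_mul_eq_one_right hm
        rw [h1, hrdef, inv_inv]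
      have : t = q + m := by rw [hminv]; ring
      rw [this]
      exact R.add_mem hqR hmR

section Key

variable {K : Type*} [Field K] [CharP K 2] (R : Subring K)

/-- Key dichotomy: every nonzero `x` satisfies a monic quadratic over `R`, or its
inverse does, or `x ∈ R`, or `x⁻¹ ∈ R`. -/
private lemma key_lemma
    (hk0 : ∀ q : K, AlgebraicOverPrime 2 q → q ∈ R)
    (𝔭 : Set K)
    (h𝔭add : ∀ x ∈ 𝔭, ∀ y ∈ 𝔭, x + y ∈ 𝔭)
    (h𝔭mul : ∀ r ∈ R, ∀ x ∈ 𝔭, r * x ∈ 𝔭)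
    (h𝔭one : (1 : K) ∉ 𝔭)
    (hlocal : ∀ x ∈ R, x ∉ 𝔭 → ∃ y ∈ R, x * y = 1)
    (H1 : ∀ a b c : K, ∃ x ∈ R, ∃ y ∈ R, ∃ z ∈ R,
      a * x + b * y + c * z = 0 ∧
      ((∃ x' ∈ R, x * x' = 1) ∨ (∃ y' ∈ R, y * y' = 1) ∨ (∃ z' ∈ R, z * z' = 1)))
    (H2 : ∀ α : K, IsWild R α → ∀ b ∈ R, ∀ c ∈ R, α ^ 2 + b * α + c = 0 →
      b ∈ 𝔭 ∧ ∃ d ∈ R, c - d ^ 2 ∈ 𝔭)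
    (x : K) (hx : x ≠ 0) :
    (∃ b ∈ R, ∃ c ∈ R, x ^ 2 + b * x + c = 0) ∨
    (∃ b ∈ R, ∃ c ∈ R, (x⁻¹) ^ 2 + b * x⁻¹ + c = 0) ∨
    x ∈ R ∨ x⁻¹ ∈ R := by
  obtain ⟨u, hu, v, hv, w, hw, heq, hunit⟩ := H1 (x ^ 2) x 1
  rcases hunit with ⟨u', hu', huu⟩ | ⟨v', hv', hvv⟩ | ⟨w', hw', hww⟩
  · -- u is a unit: x is quadratic-integral
    left
    refine ⟨v * u', R.mul_mem hv hu', w * u', R.mul_mem hw hu', ?_⟩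
    linear_combination u' * heq - x ^ 2 * huu
  · -- v is a unit
    set u₂ : K := u * v' with hu₂def
    set w₂ : K := w * v' with hw₂def
    have hu₂R : u₂ ∈ R := R.mul_mem hu hv'
    have hw₂R : w₂ ∈ R := R.mul_mem hw hv'
    have heq2 : u₂ * x ^ 2 + x + w₂ = 0 := by
      have : (x ^ 2 * u + x * v + 1 * w) * v' = 0 := by rw [heq]; ring
      linear_combination this - x * hvv
    by_cases hu0 : u₂ = 0
    · -- x = -w₂ ∈ R
      right; right; left
      have : x = -w₂ := by
        rw [hu0] at heq2
        linear_combination heq2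
      rw [this]; exact R.neg_mem hw₂R
    · set t : K := u₂ * x with htdef
      have htne : t ≠ 0 := mul_ne_zero hu0 hx
      have ht : t ^ 2 + 1 * t + u₂ * w₂ = 0 := by
        rw [htdef]
        linear_combination u₂ * heq2
      by_cases hwild : IsWild R t
      · exact absurd ((H2 t hwild 1 R.one_mem (u₂ * w₂) (R.mul_mem hu₂R hw₂R) ht).1) h𝔭one
      · rcases tame_lemma R hk0 𝔭 h𝔭add h𝔭mul h𝔭one hlocal t hwild with htR | htiR
        · by_cases ht𝔭 : t ∈ 𝔭
          · -- s = 1 + t is a unit and x = -w₂ * s⁻¹ ∈ R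
            right; right; left
            have hsR : (1 : K) + t ∈ R := R.add_mem R.one_mem htR
            have hs𝔭 : (1 : K) + t ∉ 𝔭 := by
              intro hmem
              have hneg : -t ∈ 𝔭 := by
                have := h𝔭mul (-1) (R.neg_mem R.one_mem) t ht𝔭
                simpa using this
              have : (1 : K) ∈ 𝔭 := by
                have := h𝔭add _ hmem _ hneg
                simpa using this
              exact h𝔭one this
            obtain ⟨m, hmR, hm⟩ := hlocal _ hsR hs𝔭
            have hxval : x = -(w₂ * m) := by
              have hxs : x * (1 + t) = -w₂ := by
                rw [htdef]; linear_combination heq2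
              have := congrArg (· * m) hxs
              rw [mul_assoc, hm, mul_one] at this
              rw [this]; ring
            rw [hxval]
            exact R.neg_mem (R.mul_mem hw₂R hmR)
          · -- t is a unit: x⁻¹ = u₂ * t' ∈ R
            right; right; right
            obtain ⟨m, hmR, hm⟩ := hlocal _ htR ht𝔭
            have : x * (u₂ * m) = 1 := by
              rw [htdef] at hm
              linear_combination hm
            rw [inv_eq_of_mul_eq_one_right this]
            exact R.mul_mem hu₂R hmR
        · -- t⁻¹ ∈ R : x⁻¹ = u₂ * t⁻¹ ∈ R
          right; right; right
          have : x⁻¹ = u₂ * t⁻¹ := by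
            rw [htdef, mul_inv]
            field_simp
          rw [this]
          exact R.mul_mem hu₂R htiR
  · -- w is a unit: x⁻¹ is quadratic-integral
    right; left
    refine ⟨v * w', R.mul_mem hv hw', u * w', R.mul_mem hu hw', ?_⟩
    have hx2 : x ^ 2 ≠ 0 := pow_ne_zero 2 hx
    field_simp
    linear_combination w' * heq - hww

end Key

/-- With the hypotheses of the wild/tame setting (char 2, `R` local
with maximal ideal `𝔭` containing `k₀`, (H1), (H2)): the integral closure `O` of `R` in
`K` is a valuation subring of `K`, and every `α` in the maximal ideal `M` of `O` (i.e.
every non-unit of `O`) with `α ∉ R` satisfies a monic quadratic equation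
`α² + bα + c = 0` with `b, c ∈ R`. -/
theorem integralClosure_is_valuation_ring
    {K : Type*} [Field K] [CharP K 2]
    (R : Subring K)
    (hk0 : ∀ q : K, AlgebraicOverPrime 2 q → q ∈ R)
    (𝔭 : Set K) (h𝔭R : 𝔭 ⊆ (R : Set K))
    (h𝔭zero : (0 : K) ∈ 𝔭)
    (h𝔭add : ∀ x ∈ 𝔭, ∀ y ∈ 𝔭, x + y ∈ 𝔭)
    (h𝔭mul : ∀ r ∈ R, ∀ x ∈ 𝔭, r * x ∈ 𝔭)
    (h𝔭one : (1 : K) ∉ 𝔭)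
    (hlocal : ∀ x ∈ R, x ∉ 𝔭 → ∃ y ∈ R, x * y = 1)
    (H1 : ∀ a b c : K, ∃ x ∈ R, ∃ y ∈ R, ∃ z ∈ R,
      a * x + b * y + c * z = 0 ∧
      ((∃ x' ∈ R, x * x' = 1) ∨ (∃ y' ∈ R, y * y' = 1) ∨ (∃ z' ∈ R, z * z' = 1)))
    (H2 : ∀ α : K, IsWild R α → ∀ b ∈ R, ∀ c ∈ R, α ^ 2 + b * α + c = 0 →
      b ∈ 𝔭 ∧ ∃ d ∈ R, c - d ^ 2 ∈ 𝔭) :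
    (∀ x : K, x ≠ 0 → x ∈ integralClosure ↥R K ∨ x⁻¹ ∈ integralClosure ↥R K) ∧
    (∀ α : K, α ∈ integralClosure ↥R K →
      ¬(∃ β ∈ integralClosure ↥R K, α * β = 1) → α ∉ R →
      ∃ b ∈ R, ∃ c ∈ R, α ^ 2 + b * α + c = 0) := by
  constructor
  · intro x hx
    rcases key_lemma R hk0 𝔭 h𝔭add h𝔭mul h𝔭one hlocal H1 H2 x hx with
      ⟨b, hb, c, hc, h⟩ | ⟨b, hb, c, hc, h⟩ | h | h
    · exact Or.inl (quad_integral R x b c hb hc h)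
    · exact Or.inr (quad_integral R x⁻¹ b c hb hc h)
    · exact Or.inl (mem_R_integral R x h)
    · exact Or.inr (mem_R_integral R x⁻¹ h)
  · intro α hαO hαnu hαR
    have hα0 : α ≠ 0 := fun h => hαR (h ▸ R.zero_mem)
    rcases key_lemma R hk0 𝔭 h𝔭add h𝔭mul h𝔭one hlocal H1 H2 α hα0 with
      ⟨b, hb, c, hc, h⟩ | ⟨b, hb, c, hc, h⟩ | h | h
    · exact ⟨b, hb, c, hc, h⟩
    · exact absurd ⟨α⁻¹, quad_integral R α⁻¹ b c hb hc h, mul_inv_cancel₀ hα0⟩ hαnu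
    · exact absurd h hαR
    · exact absurd ⟨α⁻¹, mem_R_integral R α⁻¹ h, mul_inv_cancel₀ hα0⟩ hαnu
end

section
/- For every x ∈ O there exists y ∈ R with x − y ∈ M; consequently the natural ring homomorphism R/(R ∩ M) → O/M is an isomorphism, i.e. the residue field of O coincides with that of R. -/
/-- Let `K` be a field of characteristic 2, `O` a valuation subring of
`K` with maximal ideal `M`, and `R` a subring of `O` which is a local ring whose maximal
ideal is `R ∩ M`.  Assume that every unit `x` of `O` with `x ∉ R` admits `ξ ∈ {x, x⁻¹}`
satisfying `ξ² + bξ + c = 0` with `b, c ∈ R`, `b ∈ M` and `c - d² ∈ M` for some `d ∈ R`.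
Then for every `x ∈ O` there exists `y ∈ R` with `x - y ∈ M`; consequently the natural
ring homomorphism `R/(R ∩ M) → O/M` is an isomorphism, i.e. the residue field of `O`
coincides with that of `R`. -/
theorem residue_field_of_O_eq_residue_field_of_R
    {K : Type*} [Field K] [CharP K 2]
    (O : Subring K)
    (hval : ∀ x : K, x ≠ 0 → x ∈ O ∨ x⁻¹ ∈ O)
    (M : Ideal ↥O)
    (hM : ∀ x : ↥O, x ∈ M ↔ ¬ IsUnit x)
    (R : Subring ↥O)
    (hlocal : ∀ x : ↥R, (x : ↥O) ∉ M → IsUnit x)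
    (hquad : ∀ x : ↥O, IsUnit x → x ∉ R →
      ∃ ξ : ↥O, (ξ = x ∨ ξ * x = 1) ∧
        ∃ b ∈ R, ∃ c ∈ R, b ∈ M ∧ (∃ d ∈ R, c - d ^ 2 ∈ M) ∧
          ξ ^ 2 + b * ξ + c = 0) :
    (∀ x : ↥O, ∃ y ∈ R, x - y ∈ M) ∧
    Function.Bijective
      (Ideal.quotientMap (I := M.comap (Subring.subtype R)) M (Subring.subtype R)
        le_rfl) := by
  have h2 : (2 : ↥O) = 0 := CharTwo.two_eq_zero
  have main : ∀ x : ↥O, ∃ y ∈ R, x - y ∈ M := by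
    intro x
    by_cases hx : IsUnit x
    · by_cases hxR : x ∈ R
      · exact ⟨x, hxR, by simpa using M.zero_mem⟩
      · obtain ⟨ξ, hξ, b, hbR, c, hcR, hbM, ⟨d, hdR, hdM⟩, heq⟩ := hquad x hx hxR
        -- (ξ - d)^2 ∈ M
        have key : (ξ - d) ^ 2 = (ξ ^ 2 + b * ξ + c) - b * ξ + (d ^ 2 - c) := by
          linear_combination (-(ξ * d)) * h2
        have hsq : (ξ - d) ^ 2 ∈ M := by
          rw [key, heq]
          have h1 : b * ξ ∈ M := M.mul_mem_right ξ hbM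
          have h3 : d ^ 2 - c ∈ M := by
            have := M.neg_mem hdM
            simpa using this
          exact M.add_mem (by simpa using M.neg_mem h1) h3
        have hξd : ξ - d ∈ M := by
          rw [hM]
          intro h
          exact ((hM _).1 hsq) (h.pow 2)
        rcases hξ with rfl | hinv
        · exact ⟨d, hdR, hξd⟩
        · -- ξ = x⁻¹ case
          have hξu : IsUnit ξ := IsUnit.of_mul_eq_one x hinv
          have hdM' : (d : ↥O) ∉ M := by
            intro h
            have : ξ ∈ M := by simpa using M.add_mem hξd h
            exact (hM ξ).1 this hξu
          obtain ⟨e, he⟩ := (hlocal ⟨d, hdR⟩ hdM').exists_left_inv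
          set y : ↥O := (e : ↥O) with hy
          have hyd : y * d = 1 := by
            have := congrArg (Subtype.val : ↥R → ↥O) he
            simpa using this
          refine ⟨y, e.2, ?_⟩
          have hxy : x - y = (-(x * y)) * (ξ - d) := by
            linear_combination (-x) * hyd + y * hinv
          rw [hxy]
          exact M.mul_mem_left _ hξd
    · refine ⟨0, R.zero_mem, ?_⟩
      simpa using (hM x).2 hx
  refine ⟨main, Ideal.quotientMap_injective, ?_⟩
  intro z
  obtain ⟨x, rfl⟩ := Ideal.Quotient.mk_surjective z
  obtain ⟨y, hyR, hxy⟩ := main x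
  refine ⟨Ideal.Quotient.mk _ (⟨y, hyR⟩ : ↥R), ?_⟩
  rw [Ideal.quotientMap_mk]
  exact Ideal.Quotient.eq.2 (by simpa using M.neg_mem hxy)
end

section
/- Assume the pre-diffeo-valued field structure is dense. Then for every nonzero a ∈ R there exist x, y ∈ K with x·y ∈ a·R, x ∉ R and y ∉ R. (Hence the ring topology on K in which the nonzero principal ideals aR form a neighborhood basis of 0 fails the defining axiom of a V-topology.) -/
/-- A pre-diffeo-valued field structure together with the secondary valuation
`val : D → Γ ∪ {∞}`. -/
structure PreDiffeoValuedS (p : ℕ) (K : Type*) [Field K]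
    (Γ : Type*) [AddCommGroup Γ] [LinearOrder Γ] [IsOrderedAddMonoid Γ]
    (k : Type*) [Field k] (D : Type*) [AddCommGroup D]
    extends PreDiffeoValued p K Γ k D where
  val : D → WithTop Γ
  val_nonpos_or_top : ∀ x : D, val x ≤ 0 ∨ val x = ⊤
  val_eq_top_iff : ∀ x : D, val x = ⊤ ↔ x = 0
  val_nonneg_iff : ∀ x : D, 0 ≤ val x ↔ ∃ z : k, phi z = x
  val_smul_of_nonpos : ∀ a ∈ O, ∀ x : D, v a + val x ≤ 0 → val (smul a x) = v a + val x
  val_smul_of_pos : ∀ a ∈ O, ∀ x : D, 0 < v a + val x → val (smul a x) = ⊤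
  val_add : ∀ x y : D, min (val x) (val y) ≤ val (x + y)
  smul_of_val_le : ∀ x y : D, val x ≤ val y → ∃ a ∈ O, y = smul a x
  smul_of_val_lt : ∀ x y : D, val x < val y → ∃ a : K, 0 < v a ∧ y = smul a x
  val_unbounded : ∀ γ : Γ, ∃ x : D, val x ≤ (γ : WithTop Γ)

section Aux

variable {p : ℕ} {K : Type*} [Field K] {Γ : Type*} [AddCommGroup Γ] [LinearOrder Γ] [IsOrderedAddMonoid Γ]
  {k : Type*} [Field k] {D : Type*} [AddCommGroup D]
  (P : PreDiffeoValuedS p K Γ k D)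

lemma aux_v_one : P.v 1 = 0 := by
  have h := P.v_mul 1 1
  rw [mul_one] at h
  have hne : P.v 1 ≠ ⊤ := fun ht => one_ne_zero ((P.v_eq_top_iff 1).mp ht)
  lift P.v 1 to Γ using hne with g hg
  have : g = g + g := by exact_mod_cast h
  have hg0 : g = 0 := by
    rcases lt_trichotomy g 0 with h' | h' | h'
    · exact absurd this.symm (ne_of_lt (by simpa using add_lt_add_of_lt_of_le h' h'.le))
    · exact h'
    · exact absurd this.symm (ne_of_gt (by simpa using add_lt_add_of_lt_of_le h' h'.le))
  exact_mod_cast hg0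

lemma aux_v_neg_one : P.v (-1) = 0 := by
  have h := P.v_mul (-1) (-1)
  rw [neg_mul_neg, one_mul, aux_v_one] at h
  have hne : P.v (-1) ≠ ⊤ :=
    fun ht => neg_ne_zero.mpr one_ne_zero ((P.v_eq_top_iff (-1)).mp ht)
  lift P.v (-1) to Γ using hne with g hg
  have hsum : g + g = 0 := by exact_mod_cast h.symm
  have hg0 : g = 0 := by
    rcases lt_trichotomy g 0 with h' | h' | h'
    · exact absurd hsum (ne_of_lt (by simpa using add_lt_add_of_lt_of_le h' h'.le))
    · exact h'
    · exact absurd hsum (ne_of_gt (by simpa using add_lt_add_of_lt_of_le h' h'.le))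
  exact_mod_cast hg0

lemma aux_v_neg (x : K) : P.v (-x) = P.v x := by
  have : (-x) = (-1) * x := by ring
  rw [this, P.v_mul, aux_v_neg_one, zero_add]

lemma aux_phi_zero : P.phi 0 = 0 := by
  have h := P.phi_add 0 0
  rw [add_zero] at h
  exact left_eq_add.mp h

lemma aux_pi_zero : P.pi 0 = 0 := by
  have h := P.pi_add 0 (zero_mem P.O) 0 (zero_mem P.O)
  rw [add_zero] at h
  exact left_eq_add.mp h

lemma aux_pi_of_Q {q : K} (hq : q ∈ P.toPreDiffeoValued.Q) : P.pi q = 0 := by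
  rw [P.pi_eq_phi_d q hq.1, hq.2, aux_phi_zero]

lemma aux_Q_mem_O {q : K} (hq : q ∈ P.toPreDiffeoValued.Q) : q ∈ P.O :=
  P.R_le_O hq.1

lemma aux_not_mem_R {t : K} (h : P.val (P.pi t) < 0) : t ∉ P.R := by
  intro htR
  have : (0 : WithTop Γ) ≤ P.val (P.pi t) := by
    rw [P.val_nonneg_iff]
    exact ⟨P.d t, (P.pi_eq_phi_d t htR).symm⟩
  exact absurd h (not_lt.mpr this)

lemma aux_val_neg {w : D} (h : 0 ≤ P.val w) : 0 ≤ P.val (-w) := by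
  rw [P.val_nonneg_iff] at h ⊢
  obtain ⟨κ, hκ⟩ := h
  refine ⟨-κ, ?_⟩
  have := P.phi_add (-κ) κ
  rw [neg_add_cancel, aux_phi_zero, hκ] at this
  exact eq_neg_of_add_eq_zero_left this.symm

lemma aux_smul_val_nonneg {a : K} (ha : a ∈ P.O) {x : D} (h : 0 ≤ P.val x) :
    0 ≤ P.val (P.smul a x) := by
  rcases le_or_gt (P.v a + P.val x) 0 with h' | h'
  · rw [P.val_smul_of_nonpos a ha x h']
    exact add_nonneg ((P.mem_O_iff a).mp ha) h
  · rw [P.val_smul_of_pos a ha x h']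
    exact le_top

lemma aux_val_add_lt {u w : D} (hu : P.val u < 0) (hw : 0 ≤ P.val w) :
    P.val (u + w) < 0 := by
  by_contra hcon
  push_neg at hcon
  have heq : (u + w) + (-w) = u := by abel
  have := P.val_add (u + w) (-w)
  rw [heq] at this
  have : (0 : WithTop Γ) ≤ P.val u :=
    le_trans (le_min hcon (aux_val_neg P hw)) this
  exact absurd hu (not_lt.mpr this)

lemma aux_exists_q (hdense : P.toPreDiffeoValued.IsDense) {γ0 : Γ} (h : 0 ≤ γ0) :
    ∃ q ∈ P.toPreDiffeoValued.Q, P.v q = (γ0 : WithTop Γ) := by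
  obtain ⟨c1, hc1⟩ := P.v_surj γ0
  have hc1O : c1 ∈ P.O := by
    rw [P.mem_O_iff, hc1]; exact_mod_cast h
  obtain ⟨q, hq, hlt⟩ := hdense c1 hc1O γ0
  refine ⟨q, hq, ?_⟩
  have hq1 : (γ0 : WithTop Γ) ≤ P.v q := by
    have heq : c1 + (-(c1 - q)) = q := by ring
    have := P.v_add c1 (-(c1 - q))
    rw [heq, aux_v_neg] at this
    exact le_trans (le_min (le_of_eq hc1.symm) hlt.le) this
  have hq2 : ¬ ((γ0 : WithTop Γ) < P.v q) := by
    intro hgt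
    have heq : q + (c1 - q) = c1 := by ring
    have := P.v_add q (c1 - q)
    rw [heq, hc1] at this
    exact absurd (lt_of_lt_of_le (lt_min hgt hlt) this) (lt_irrefl _)
  exact le_antisymm (not_lt.mp hq2) hq1

lemma aux_nontrivial_gamma (hdense : P.toPreDiffeoValued.IsDense) : ∃ g : Γ, 0 < g := by
  by_contra hcon
  push_neg at hcon
  obtain ⟨b, hbO, hb⟩ := P.pi_surjective (P.phi 1)
  obtain ⟨q, hq, hlt⟩ := hdense b hbO 0
  have htop : P.v (b - q) = ⊤ := by
    by_contra hne
    lift P.v (b - q) to Γ using hne with g hg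
    have : (0 : Γ) < g := by exact_mod_cast hlt
    exact absurd this (not_lt.mpr (hcon g))
  have hbq : b = q := by
    have := (P.v_eq_top_iff (b - q)).mp htop
    exact sub_eq_zero.mp this
  have : P.pi b = 0 := by rw [hbq]; exact aux_pi_of_Q P hq
  rw [hb] at this
  have h10 : (1 : k) = 0 := by
    apply P.phi_injective
    rw [this, aux_phi_zero]
  exact one_ne_zero h10

end Aux

/-- If the pre-diffeo-valued field structure is dense, then for every
nonzero `a ∈ R` there exist `x, y ∈ K` with `x·y ∈ a·R`, `x ∉ R` and `y ∉ R`.  (Hence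
the ring topology on `K` with the nonzero principal ideals `aR` as a neighborhood basis
of `0` fails the defining axiom of a V-topology.) -/
theorem exists_product_in_aR_with_factors_not_in_R
    {p : ℕ} (hp : p.Prime) {K : Type*} [Field K] [CharP K p]
    {Γ : Type*} [AddCommGroup Γ] [LinearOrder Γ] [IsOrderedAddMonoid Γ]
    {k : Type*} [Field k] {D : Type*} [AddCommGroup D]
    (P : PreDiffeoValuedS p K Γ k D)
    (hdense : P.toPreDiffeoValued.IsDense) :
    ∀ a ∈ P.R, a ≠ 0 →
      ∃ x y : K, (∃ r ∈ P.R, x * y = a * r) ∧ x ∉ P.R ∧ y ∉ P.R := by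
  intro a haR ha0
  have haO : a ∈ P.O := P.R_le_O haR
  have hvaT : P.v a ≠ ⊤ := fun ht => ha0 ((P.v_eq_top_iff a).mp ht)
  obtain ⟨ga, hga⟩ : ∃ g : Γ, P.v a = ↑g := by
    lift P.v a to Γ using hvaT with g hg; exact ⟨g, rfl⟩
  have hga0 : (0 : Γ) ≤ ga := by
    have := (P.mem_O_iff a).mp haO
    rw [hga] at this; exact_mod_cast this
  obtain ⟨γ₁, hγ₁⟩ := aux_nontrivial_gamma P hdense
  -- get z ∈ D of very negative val, and c ∈ O with π c = z
  set γ : Γ := -ga - γ₁ - γ₁ with hγdef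
  obtain ⟨z, hz⟩ := P.val_unbounded γ
  have hzT : P.val z ≠ ⊤ := by
    intro h
    rw [h] at hz
    exact absurd hz (by simp)
  obtain ⟨δ, hδ⟩ : ∃ g : Γ, P.val z = ↑g := by
    lift P.val z to Γ using hzT with g hg; exact ⟨g, rfl⟩
  have hδγ : δ ≤ γ := by rw [hδ] at hz; exact_mod_cast hz
  have hδneg : δ < 0 := by
    calc δ ≤ -ga - γ₁ - γ₁ := hδγ
      _ ≤ -(0:Γ) - γ₁ - γ₁ := by gcongr
      _ = -γ₁ + -γ₁ := by abel
      _ < 0 := by simpa using add_lt_add_of_lt_of_le (neg_neg_iff_pos.mpr hγ₁) (neg_nonpos.mpr hγ₁.le)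
  obtain ⟨c0, hc0O, hc0⟩ := P.pi_surjective z
  -- π of a Q-element is 0, so we may replace c0 by c0 - q' with v large
  obtain ⟨q', hq', hq'lt⟩ := hdense c0 hc0O γ₁
  set c : K := c0 - q' with hcdef
  have hcO : c ∈ P.O := sub_mem hc0O (aux_Q_mem_O P hq')
  have hπc : P.pi c = z := by
    have h1 : P.pi (c + q') = P.pi c + P.pi q' :=
      P.pi_add c hcO q' (aux_Q_mem_O P hq')
    have h2 : c + q' = c0 := by rw [hcdef]; ring
    rw [h2, hc0, aux_pi_of_Q P hq', add_zero] at h1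
    exact h1.symm
  have hvc : (γ₁ : WithTop Γ) < P.v c := hq'lt
  have hcne : c ≠ 0 := by
    intro h
    rw [h, aux_pi_zero] at hπc
    rw [← hπc] at hzT
    exact hzT ((P.val_eq_top_iff 0).mpr rfl)
  have hvcT : P.v c ≠ ⊤ := fun ht => hcne ((P.v_eq_top_iff c).mp ht)
  obtain ⟨gc, hgc⟩ : ∃ g : Γ, P.v c = ↑g := by
    lift P.v c to Γ using hvcT with g hg; exact ⟨g, rfl⟩
  have hgcγ₁ : γ₁ < gc := by rw [hgc] at hvc; exact_mod_cast hvc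
  -- c ∉ R since val (π c) = δ < 0
  have hcR : c ∉ P.R := by
    apply aux_not_mem_R
    rw [hπc, hδ]
    exact_mod_cast hδneg
  by_cases h2 : p = 2
  · -- characteristic 2 case: x = c, y = (a * q'') * c with q'' ∈ Q, v q'' = γ₁
    obtain ⟨q'', hq'', hvq''⟩ := aux_exists_q P hdense hγ₁.le
    have hq''O : q'' ∈ P.O := aux_Q_mem_O P hq''
    have hresq'' : P.res q'' = 0 := by
      rw [P.res_eq_zero_iff q'' hq''O, hvq'']
      exact_mod_cast hγ₁
    have hsQ : (a * q'') ∈ P.toPreDiffeoValued.Q := by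
      constructor
      · exact mul_mem haR hq''.1
      · rw [P.d_leibniz a haR q'' hq''.1, hq''.2, hresq'']
        simp
    have hsO : a * q'' ∈ P.O := aux_Q_mem_O P hsQ
    refine ⟨c, (a * q'') * c, ⟨q'' * c ^ 2, ?_, by ring⟩, hcR, ?_⟩
    · exact mul_mem hq''.1 ((P.char_two_sq h2 c hcO).1)
    · apply aux_not_mem_R
      rw [P.pi_qsmul (a * q'') hsQ.1 hsQ.2 c hcO, hπc]
      have hvs : P.v (a * q'') = ((ga + γ₁ : Γ) : WithTop Γ) := by
        rw [P.v_mul, hga, hvq'']; exact_mod_cast rfl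
      have hkey : ga + γ₁ + δ < 0 := by
        calc ga + γ₁ + δ ≤ ga + γ₁ + (-ga - γ₁ - γ₁) := by gcongr
          _ = -γ₁ := by abel
          _ < 0 := neg_neg_iff_pos.mpr hγ₁
      have hle : P.v (a * q'') + P.val z ≤ 0 := by
        rw [hvs, hδ]
        exact_mod_cast hkey.le
      rw [P.val_smul_of_nonpos (a * q'') hsO z hle, hvs, hδ]
      exact_mod_cast hkey
  · -- odd characteristic case: x = q * c, y = a * c, with q ∈ Q, v q = -δ - γ₁
    have hδγ₁ : δ ≤ -γ₁ := by
      calc δ ≤ -ga - γ₁ - γ₁ := hδγ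
        _ ≤ -(0:Γ) - γ₁ - γ₁ := by gcongr
        _ = -γ₁ + -γ₁ := by abel
        _ ≤ -γ₁ := by simpa using neg_nonpos.mpr hγ₁.le
    have hγ0nn : (0 : Γ) ≤ -δ - γ₁ := by
      have := neg_le_neg hδγ₁
      rw [neg_neg] at this
      calc (0:Γ) = γ₁ - γ₁ := by abel
        _ ≤ -δ - γ₁ := by gcongr
    obtain ⟨q, hq, hvq⟩ := aux_exists_q P hdense hγ0nn
    have hqO : q ∈ P.O := aux_Q_mem_O P hq
    refine ⟨q * c, a * c, ⟨q * (c * c), ?_, by ring⟩, ?_, ?_⟩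
    · -- r = q * (c * c) ∈ R since π r = 0
      have hccO : c * c ∈ P.O := mul_mem hcO hcO
      have hπr : P.pi (q * (c * c)) = 0 := by
        rw [P.pi_qsmul q hq.1 hq.2 (c * c) hccO,
            P.char_odd_pi h2 c hcO c hcO, hπc,
            P.smul_add q hqO]
        have hz0 : P.smul q (P.smul c z) = 0 := by
          rw [← P.mul_smul q hqO c hcO]
          apply (P.val_eq_top_iff _).mp
          apply P.val_smul_of_pos (q * c) (mul_mem hqO hcO) z
          have hvqc : P.v (q * c) = ((-δ - γ₁ + gc : Γ) : WithTop Γ) := by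
            rw [P.v_mul, hvq, hgc]; exact_mod_cast rfl
          rw [hvqc, hδ]
          have : (0 : Γ) < -δ - γ₁ + gc + δ := by
            calc (0:Γ) = γ₁ + -γ₁ := by abel
              _ < gc + -γ₁ := by gcongr
              _ = -δ - γ₁ + gc + δ := by abel
          exact_mod_cast this
        rw [hz0, add_zero]
      exact ((P.pi_eq_zero_iff (q * (c * c)) (mul_mem hqO (mul_mem hcO hcO))).mp hπr).1
    · -- x = q * c ∉ R
      apply aux_not_mem_R
      rw [P.pi_qsmul q hq.1 hq.2 c hcO, hπc]
      have hle : P.v q + P.val z ≤ 0 := by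
        rw [hvq, hδ]
        have : (-δ - γ₁) + δ = -γ₁ := by abel
        rw [show ((-δ - γ₁ : Γ) : WithTop Γ) + (δ : WithTop Γ) = ((-γ₁ : Γ) : WithTop Γ) by
          rw [← WithTop.coe_add, this]]
        exact_mod_cast neg_nonpos.mpr hγ₁.le
      rw [P.val_smul_of_nonpos q hqO z hle, hvq, hδ]
      rw [show ((-δ - γ₁ : Γ) : WithTop Γ) + (δ : WithTop Γ) = ((-γ₁ : Γ) : WithTop Γ) by
        rw [← WithTop.coe_add]; norm_cast; abel]
      exact_mod_cast neg_neg_iff_pos.mpr hγ₁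
    · -- y = a * c ∉ R
      apply aux_not_mem_R
      rw [P.char_odd_pi h2 a haO c hcO, hπc]
      apply aux_val_add_lt
      · have hkey : ga + δ < 0 := by
          calc ga + δ ≤ ga + (-ga - γ₁ - γ₁) := by gcongr
            _ = -γ₁ + -γ₁ := by abel
            _ < 0 := by
              simpa using add_lt_add_of_lt_of_le (neg_neg_iff_pos.mpr hγ₁) (neg_nonpos.mpr hγ₁.le)
        have hle : P.v a + P.val z ≤ 0 := by
          rw [hga, hδ]; exact_mod_cast hkey.le
        rw [P.val_smul_of_nonpos a haO z hle, hga, hδ]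
        exact_mod_cast hkey
      · apply aux_smul_val_nonneg P hcO
        rw [P.val_nonneg_iff]
        exact ⟨P.d a, (P.pi_eq_phi_d a haR).symm⟩
end

section
/- For every b ∈ K with b ∉ S there exists q ∈ K algebraic over F_p such that (b − q)⁻¹ ∈ S. -/
lemma alg_pow {p : ℕ} (hp : p.Prime) {K : Type*} [Field K] [CharP K p] {q : K}
    (h : AlgebraicOverPrime p q) : ∃ k : ℕ, 1 ≤ k ∧ q ^ p ^ k = q := by
  haveI := Fact.mk hp
  letI : Algebra (ZMod p) K := (ZMod.castHom dvd_rfl K).toAlgebra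
  obtain ⟨f, hf0, hf⟩ := h
  have hint : IsIntegral (ZMod p) q := by
    refine (isAlgebraic_iff_isIntegral).mp ⟨f, hf0, ?_⟩
    rw [Polynomial.aeval_def]
    exact hf
  let F := IntermediateField.adjoin (ZMod p) {q}
  haveI : FiniteDimensional (ZMod p) F := IntermediateField.adjoin.finiteDimensional hint
  haveI : Finite F := (Module.finite_iff_finite (R := ZMod p)).mp inferInstance
  haveI : Fintype F := Fintype.ofFinite F
  haveI : CharP F p := charP_of_injective_algebraMap' (ZMod p) (A := F) p
  obtain ⟨n, -, hcard⟩ := FiniteField.card F p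
  set x : F := ⟨q, IntermediateField.mem_adjoin_simple_self _ q⟩
  have hx : x ^ Fintype.card F = x := FiniteField.pow_card x
  refine ⟨n, n.one_le, ?_⟩
  have := congrArg (algebraMap F K) hx
  rw [map_pow] at this
  rw [← hcard]
  exact this

lemma pow_iter {K : Type*} [Field K] {q : K} {m a : ℕ} (hq : q ^ m ^ a = q) :
    ∀ c : ℕ, q ^ m ^ (a * c) = q := by
  intro c
  induction c with
  | zero => simp
  | succ c ih =>
    rw [Nat.mul_succ, pow_add, pow_mul, ih, hq]

lemma mem_of_pow_eq {K : Type*} [Field K] (O : Subring K)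
    (hO : ∀ x : K, x ≠ 0 → x ∈ O ∨ x⁻¹ ∈ O) (x : K) (m : ℕ) (hm : 2 ≤ m)
    (hx : x ^ m = x) : x ∈ O ∧ x⁻¹ ∈ O := by
  rcases eq_or_ne x 0 with h0 | h0
  · subst h0
    exact ⟨O.zero_mem, by rw [inv_zero]; exact O.zero_mem⟩
  have key : ∀ y : K, y ≠ 0 → y ^ m = y → y⁻¹ = y ^ (m - 2) := by
    intro y hy hym
    have h1 : y ^ (m - 1) = 1 := by
      have h1' : y ^ (m - 1) * y = 1 * y := by
        rw [one_mul, ← pow_succ, Nat.sub_add_cancel (by omega), hym]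
      exact mul_right_cancel₀ hy h1'
    have h2 : y ^ (m - 2) * y = 1 := by
      rw [← pow_succ, show m - 2 + 1 = m - 1 by omega, h1]
    exact (eq_inv_of_mul_eq_one_left h2).symm
  have hxinv : x⁻¹ ^ m = x⁻¹ := by rw [inv_pow, hx]
  rcases hO x h0 with h | h
  · exact ⟨h, by rw [key x h0 hx]; exact pow_mem h _⟩
  · have hx' : x ∈ O := by
      have := key x⁻¹ (inv_ne_zero h0) hxinv
      rw [inv_inv] at this
      rw [this]; exact pow_mem h _
    exact ⟨hx', h⟩

/-- Let `p` be a prime, `K` a field of characteristic `p`, `n ≥ 1`,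
`O₁, …, Oₙ` valuation subrings of `K` and `S = O₁ ∩ ⋯ ∩ Oₙ`.  If `K` contains at least
`n` pairwise distinct elements algebraic over `𝔽_p`, then for every `b ∈ K` with
`b ∉ S` there exists `q ∈ K` algebraic over `𝔽_p` such that `(b - q)⁻¹ ∈ S`. -/
theorem exists_algebraic_shift_inv_mem_multivaluation
    {p : ℕ} (hp : p.Prime) {K : Type*} [Field K] [CharP K p]
    (n : ℕ) (hn : 1 ≤ n)
    (Os : Fin n → Subring K)
    (hOs : ∀ i, ∀ x : K, x ≠ 0 → x ∈ Os i ∨ x⁻¹ ∈ Os i)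
    (f : Fin n → K) (hfinj : Function.Injective f)
    (hfalg : ∀ i, AlgebraicOverPrime p (f i)) :
    ∀ b : K, ¬ (∀ i, b ∈ Os i) →
      ∃ q : K, AlgebraicOverPrime p q ∧ ∀ i, (b - q)⁻¹ ∈ Os i := by
  intro b hb
  push_neg at hb
  obtain ⟨i₀, hi₀⟩ := hb
  haveI := Fact.mk hp
  have hp2 : 2 ≤ p := hp.two_le
  -- diffs of the f j satisfy a power identity
  have hdiff : ∀ j₁ j₂ : Fin n, ∃ m : ℕ, 2 ≤ m ∧ (f j₁ - f j₂) ^ m = f j₁ - f j₂ := by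
    intro j₁ j₂
    obtain ⟨a, ha1, ha⟩ := alg_pow hp (hfalg j₁)
    obtain ⟨c, hc1, hc⟩ := alg_pow hp (hfalg j₂)
    refine ⟨p ^ (a * c), ?_, ?_⟩
    · calc 2 ≤ p := hp2
        _ = p ^ 1 := (pow_one p).symm
        _ ≤ p ^ (a * c) := Nat.pow_le_pow_right (by omega) (by nlinarith)
    · rw [sub_pow_char_pow, pow_iter ha c, mul_comm, pow_iter hc a]
  -- each f j and its properties: f j ∈ every Os i
  have hfmem : ∀ j i, f j ∈ Os i := by
    intro j i
    obtain ⟨a, ha1, ha⟩ := alg_pow hp (hfalg j)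
    refine (mem_of_pow_eq (Os i) (hOs i) (f j) (p ^ a) ?_ ha).1
    calc 2 ≤ p := hp2
      _ = p ^ 1 := (pow_one p).symm
      _ ≤ p ^ a := Nat.pow_le_pow_right (by omega) ha1
  classical
  set bad : Fin n → Finset (Fin n) :=
    fun i => Finset.univ.filter (fun j => (b - f j)⁻¹ ∉ Os i) with hbad
  -- bad i₀ is empty
  have hbad0 : bad i₀ = ∅ := by
    rw [Finset.eq_empty_iff_forall_notMem]
    intro j hj
    rw [hbad, Finset.mem_filter] at hj
    have hne : b - f j ≠ 0 := by
      intro h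
      exact hi₀ (by rw [sub_eq_zero] at h; rw [h]; exact hfmem j i₀)
    rcases hOs i₀ (b - f j) hne with h | h
    · exact hi₀ (by have := (Os i₀).add_mem h (hfmem j i₀); simpa using this)
    · exact hj.2 h
  -- each bad i has at most one element
  have hbad1 : ∀ i, (bad i).card ≤ 1 := by
    intro i
    rw [Finset.card_le_one]
    intro j₁ hj₁ j₂ hj₂
    by_contra hne
    rw [hbad, Finset.mem_filter] at hj₁ hj₂
    have h₁ := hj₁.2; have h₂ := hj₂.2
    have hq : f j₁ ≠ f j₂ := fun h => hne (hfinj h)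
    set u := b - f j₁ with hu
    set v := b - f j₂ with hv
    have hu0 : u ≠ 0 := by
      intro h; apply h₁; rw [h, inv_zero]; exact (Os i).zero_mem
    have hv0 : v ≠ 0 := by
      intro h; apply h₂; rw [h, inv_zero]; exact (Os i).zero_mem
    have huO : u ∈ Os i := (hOs i u hu0).resolve_right h₁
    have hvO : v ∈ Os i := (hOs i v hv0).resolve_right h₂
    obtain ⟨m, hm2, hm⟩ := hdiff j₁ j₂
    have hd0 : f j₁ - f j₂ ≠ 0 := sub_ne_zero.mpr hq
    have hdinv : (f j₁ - f j₂)⁻¹ ∈ Os i :=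
      (mem_of_pow_eq (Os i) (hOs i) _ m hm2 hm).2
    have huv : u - v = f j₂ - f j₁ := by rw [hu, hv]; ring
    have hduv : u - v ≠ 0 := by
      rw [huv]; exact sub_ne_zero.mpr (fun hh => hq hh.symm)
    have hvu : v - u = f j₁ - f j₂ := by rw [hu, hv]; ring
    have hdvu : v - u ≠ 0 := by rw [hvu]; exact hd0
    rcases hOs i (u / v) (div_ne_zero hu0 hv0) with h | h
    · apply h₂
      have hkey : v⁻¹ = (u / v - 1) * (u - v)⁻¹ := by
        field_simp
      rw [hkey, huv]
      have hneg : (f j₂ - f j₁)⁻¹ ∈ Os i := by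
        have hre : (f j₂ - f j₁)⁻¹ = -(f j₁ - f j₂)⁻¹ := by
          rw [← inv_neg]; ring_nf
        rw [hre]; exact (Os i).neg_mem hdinv
      exact (Os i).mul_mem ((Os i).sub_mem h (Os i).one_mem) hneg
    · apply h₁
      rw [inv_div] at h
      have hkey : u⁻¹ = (v / u - 1) * (v - u)⁻¹ := by
        field_simp
      rw [hkey, hvu]
      exact (Os i).mul_mem ((Os i).sub_mem h (Os i).one_mem) hdinv
  -- counting
  have hcount : (Finset.univ.biUnion bad).card < n := by
    calc (Finset.univ.biUnion bad).card
        ≤ ∑ i, (bad i).card := Finset.card_biUnion_le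
      _ = ∑ i ∈ Finset.univ.erase i₀, (bad i).card := by
          rw [← Finset.add_sum_erase _ _ (Finset.mem_univ i₀), hbad0]
          simp
      _ ≤ ∑ i ∈ Finset.univ.erase i₀, 1 := Finset.sum_le_sum (fun i _ => hbad1 i)
      _ = n - 1 := by simp [Finset.card_erase_of_mem]
      _ < n := by omega
  have : ∃ j, j ∉ Finset.univ.biUnion bad := by
    by_contra h
    push_neg at h
    have : Finset.univ.biUnion bad = Finset.univ := Finset.eq_univ_iff_forall.mpr h
    rw [this] at hcount
    simp at hcount
  obtain ⟨j, hj⟩ := this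
  refine ⟨f j, hfalg j, fun i => ?_⟩
  by_contra h
  exact hj (Finset.mem_biUnion.mpr ⟨i, Finset.mem_univ i, by
    rw [hbad, Finset.mem_filter]; exact ⟨Finset.mem_univ j, h⟩⟩)
end

section
/- Assume the pre-diffeo-valued field structure is dense. Then for all a, b, c ∈ K, the Q-submodule Qa + Qb + Qc of K is generated by a two-element subset of {a, b, c}; that is, Qa + Qb + Qc equals one of Qa + Qb, Qa + Qc, or Qb + Qc. -/
section Aux

variable {p : ℕ} {K : Type*} [Field K] {Γ : Type*} [AddCommGroup Γ] [LinearOrder Γ] [IsOrderedAddMonoid Γ]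
  {k : Type*} [Field k] {D : Type*} [AddCommGroup D]

theorem PDV.d_zero (P : PreDiffeoValuedS p K Γ k D) : P.d 0 = 0 := by
  have h := P.d_add 0 (zero_mem P.R) 0 (zero_mem P.R)
  rw [zero_add] at h
  exact (left_eq_add.mp h)

theorem PDV.zero_mem_Q (P : PreDiffeoValuedS p K Γ k D) : (0 : K) ∈ P.Q :=
  ⟨zero_mem P.R, PDV.d_zero P⟩

theorem PDV.add_mem_Q (P : PreDiffeoValuedS p K Γ k D) {x y : K}
    (hx : x ∈ P.Q) (hy : y ∈ P.Q) : x + y ∈ P.Q := by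
  refine ⟨add_mem hx.1 hy.1, ?_⟩
  rw [P.d_add x hx.1 y hy.1, hx.2, hy.2, add_zero]

theorem PDV.mul_mem_Q (P : PreDiffeoValuedS p K Γ k D) {x y : K}
    (hx : x ∈ P.Q) (hy : y ∈ P.Q) : x * y ∈ P.Q := by
  refine ⟨mul_mem hx.1 hy.1, ?_⟩
  rw [P.d_leibniz x hx.1 y hy.1, hx.2, hy.2, mul_zero, mul_zero, add_zero]

theorem PDV.Q_sub_O (P : PreDiffeoValuedS p K Γ k D) {x : K} (hx : x ∈ P.Q) :
    x ∈ P.O := P.R_le_O hx.1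

theorem PDV.smul_zero (P : PreDiffeoValuedS p K Γ k D) {a : K} (ha : a ∈ P.O) :
    P.smul a 0 = 0 := by
  have h := P.smul_add a ha 0 0
  rw [zero_add] at h
  exact (left_eq_add.mp h)

/-- For any `a ∈ O` and `x ∈ D` there is `q ∈ Q` with `a·x = q·x`, by density. -/
theorem PDV.smul_approx (P : PreDiffeoValuedS p K Γ k D)
    (hdense : P.toPreDiffeoValued.IsDense) {a : K} (ha : a ∈ P.O) (x : D) :
    ∃ q ∈ P.Q, P.smul a x = P.smul q x := by
  by_cases hx : x = 0
  · exact ⟨0, PDV.zero_mem_Q P, by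
      rw [hx, PDV.smul_zero P ha, PDV.smul_zero P (zero_mem P.O)]⟩
  · have h1 : P.val x ≠ ⊤ := fun h => hx ((P.val_eq_top_iff x).mp h)
    have h2 : P.val x ≤ 0 := (P.val_nonpos_or_top x).resolve_right h1
    obtain ⟨γ₀, hγ₀⟩ := WithTop.ne_top_iff_exists.mp h1
    have hγ₀le : γ₀ ≤ 0 := by
      have : (γ₀ : WithTop Γ) ≤ ((0 : Γ) : WithTop Γ) := by
        rw [hγ₀]; simpa using h2
      exact_mod_cast this
    obtain ⟨q, hq, hv⟩ := hdense a ha (-γ₀)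
    have hqO : q ∈ P.O := P.R_le_O hq.1
    have hcoe0 : (0 : WithTop Γ) ≤ ((-γ₀ : Γ) : WithTop Γ) := by
      exact_mod_cast neg_nonneg.mpr hγ₀le
    have hsub : a - q ∈ P.O := by
      rw [P.mem_O_iff]
      exact le_of_lt (lt_of_le_of_lt hcoe0 hv)
    have hpos : 0 < P.v (a - q) + P.val x := by
      rw [← hγ₀]
      rcases eq_or_ne (P.v (a - q)) ⊤ with htop | hne
      · rw [htop, top_add]
        exact lt_top_iff_ne_top.mpr (by simp)
      · obtain ⟨δ, hδ⟩ := WithTop.ne_top_iff_exists.mp hne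
        rw [← hδ, ← WithTop.coe_add]
        have hδgt : -γ₀ < δ := by
          have := hv; rw [← hδ] at this; exact_mod_cast this
        have : (0 : Γ) < δ + γ₀ := by
          have := add_lt_add_of_lt_of_le hδgt (le_refl γ₀)
          rwa [neg_add_cancel] at this
        exact_mod_cast this
    have hz : P.smul (a - q) x = 0 :=
      (P.val_eq_top_iff _).mp (P.val_smul_of_pos _ hsub x hpos)
    refine ⟨q, hq, ?_⟩
    have h3 := P.add_smul (a - q) hsub q hqO x
    rw [sub_add_cancel] at h3
    rw [h3, hz, zero_add]

theorem PDV.half (P : PreDiffeoValuedS p K Γ k D)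
    (hdense : P.toPreDiffeoValued.IsDense) {t s : K}
    (htO : t ∈ P.O) (hsO : s ∈ P.O)
    (h : ∃ α ∈ P.O, P.pi s = P.smul α (P.pi t)) :
    ∃ q ∈ P.Q, ∃ q' ∈ P.Q, s = q + q' * t := by
  obtain ⟨α, hα, hs⟩ := h
  obtain ⟨q', hq', hsm⟩ := PDV.smul_approx P hdense hα (P.pi t)
  have h1 : P.pi s = P.pi (q' * t) := by
    rw [hs, hsm, P.pi_qsmul q' hq'.1 hq'.2 t htO]
  have hq'O : q' ∈ P.O := P.R_le_O hq'.1
  have hmem : q' * t ∈ P.O := mul_mem hq'O htO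
  have hr : s - q' * t ∈ P.O := sub_mem hsO hmem
  have h2 : P.pi s = P.pi (s - q' * t) + P.pi (q' * t) := by
    have h' := P.pi_add (s - q' * t) hr (q' * t) hmem
    rw [sub_add_cancel] at h'
    exact h'
  have h3 : P.pi (s - q' * t) = 0 := by
    rw [h1] at h2
    exact right_eq_add.mp h2
  have hQ : s - q' * t ∈ P.Q := (P.pi_eq_zero_iff _ hr).mp h3
  exact ⟨s - q' * t, hQ, q', hq', by ring⟩

theorem PDV.key (P : PreDiffeoValuedS p K Γ k D)
    (hdense : P.toPreDiffeoValued.IsDense) {t s : K}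
    (htO : t ∈ P.O) (hsO : s ∈ P.O) :
    (∃ q ∈ P.Q, ∃ q' ∈ P.Q, s = q + q' * t) ∨
    (∃ q ∈ P.Q, ∃ q' ∈ P.Q, t = q + q' * s) := by
  rcases P.total (P.pi s) (P.pi t) with h | h
  · exact Or.inl (PDV.half P hdense htO hsO h)
  · exact Or.inr (PDV.half P hdense hsO htO h)

theorem PDV.div_mem_O (P : PreDiffeoValuedS p K Γ k D) {a b : K}
    (ha : a ≠ 0) (hb : b ≠ 0) (h : P.v a ≤ P.v b) : b / a ∈ P.O := by
  have hvb : P.v (b / a) ≠ ⊤ := fun hh => (div_ne_zero hb ha) ((P.v_eq_top_iff _).mp hh)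
  have hva : P.v a ≠ ⊤ := fun hh => ha ((P.v_eq_top_iff _).mp hh)
  obtain ⟨γ, hγ⟩ := WithTop.ne_top_iff_exists.mp hvb
  obtain ⟨γa, hγa⟩ := WithTop.ne_top_iff_exists.mp hva
  have hmul : P.v (b / a * a) = P.v (b / a) + P.v a := P.v_mul _ _
  rw [div_mul_cancel₀ b ha] at hmul
  rw [hmul, ← hγ, ← hγa, ← WithTop.coe_add] at h
  have h' : γa ≤ γ + γa := by exact_mod_cast h
  have h0 : (0 : Γ) ≤ γ := (le_add_iff_nonneg_left γa).mp h'
  rw [P.mem_O_iff, ← hγ]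
  exact_mod_cast h0

theorem PDV.span_drop (P : PreDiffeoValuedS p K Γ k D) {a b c : K}
    {q q' : K} (hq : q ∈ P.Q) (hq' : q' ∈ P.Q) (h : c = q * a + q' * b) :
    {x : K | ∃ q₁ ∈ P.Q, ∃ q₂ ∈ P.Q, ∃ q₃ ∈ P.Q, x = q₁ * a + q₂ * b + q₃ * c} =
    {x : K | ∃ q₁ ∈ P.Q, ∃ q₂ ∈ P.Q, x = q₁ * a + q₂ * b} := by
  ext x
  simp only [Set.mem_setOf_eq]
  constructor
  · rintro ⟨q₁, h₁, q₂, h₂, q₃, h₃, rfl⟩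
    exact ⟨q₁ + q₃ * q, PDV.add_mem_Q P h₁ (PDV.mul_mem_Q P h₃ hq),
      q₂ + q₃ * q', PDV.add_mem_Q P h₂ (PDV.mul_mem_Q P h₃ hq'),
      by rw [h]; ring⟩
  · rintro ⟨q₁, h₁, q₂, h₂, rfl⟩
    exact ⟨q₁, h₁, q₂, h₂, 0, PDV.zero_mem_Q P, by ring⟩

theorem PDV.span_perm (P : PreDiffeoValuedS p K Γ k D) (a b c : K) :
    {x : K | ∃ q₁ ∈ P.Q, ∃ q₂ ∈ P.Q, ∃ q₃ ∈ P.Q, x = q₁ * a + q₂ * b + q₃ * c} =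
    {x : K | ∃ q₁ ∈ P.Q, ∃ q₂ ∈ P.Q, ∃ q₃ ∈ P.Q, x = q₁ * b + q₂ * c + q₃ * a} := by
  ext x
  simp only [Set.mem_setOf_eq]
  constructor
  · rintro ⟨q₁, h₁, q₂, h₂, q₃, h₃, rfl⟩
    exact ⟨q₂, h₂, q₃, h₃, q₁, h₁, by ring⟩
  · rintro ⟨q₁, h₁, q₂, h₂, q₃, h₃, rfl⟩
    exact ⟨q₃, h₃, q₁, h₁, q₂, h₂, by ring⟩

theorem PDV.span_swap (P : PreDiffeoValuedS p K Γ k D) (a b : K) :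
    {x : K | ∃ q₁ ∈ P.Q, ∃ q₂ ∈ P.Q, x = q₁ * a + q₂ * b} =
    {x : K | ∃ q₁ ∈ P.Q, ∃ q₂ ∈ P.Q, x = q₁ * b + q₂ * a} := by
  ext x
  simp only [Set.mem_setOf_eq]
  constructor <;> rintro ⟨q₁, h₁, q₂, h₂, rfl⟩ <;>
    exact ⟨q₂, h₂, q₁, h₁, by ring⟩

theorem PDV.mul_out {K : Type*} [Field K] {m x q q' y : K} (hm : m ≠ 0)
    (h : x / m = q + q' * (y / m)) : x = q * m + q' * y := by
  have h2 : x / m * m = (q + q' * (y / m)) * m := by rw [h]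
  rw [div_mul_cancel₀ x hm, add_mul, mul_assoc, div_mul_cancel₀ y hm] at h2
  exact h2

end Aux

/-- If the pre-diffeo-valued field structure is dense, then for all
`a, b, c ∈ K` the `Q`-submodule `Qa + Qb + Qc` of `K` is generated by a two-element
subset of `{a, b, c}`: it equals one of `Qa + Qb`, `Qa + Qc` or `Qb + Qc`. -/
theorem Q_submodule_three_generated_by_two
    {p : ℕ} (hp : p.Prime) {K : Type*} [Field K] [CharP K p]
    {Γ : Type*} [AddCommGroup Γ] [LinearOrder Γ] [IsOrderedAddMonoid Γ]
    {k : Type*} [Field k] {D : Type*} [AddCommGroup D]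
    (P : PreDiffeoValuedS p K Γ k D)
    (hdense : P.toPreDiffeoValued.IsDense) :
    ∀ a b c : K,
      ({x : K | ∃ q₁ ∈ P.Q, ∃ q₂ ∈ P.Q, ∃ q₃ ∈ P.Q, x = q₁ * a + q₂ * b + q₃ * c} =
          {x : K | ∃ q₁ ∈ P.Q, ∃ q₂ ∈ P.Q, x = q₁ * a + q₂ * b}) ∨
      ({x : K | ∃ q₁ ∈ P.Q, ∃ q₂ ∈ P.Q, ∃ q₃ ∈ P.Q, x = q₁ * a + q₂ * b + q₃ * c} =
          {x : K | ∃ q₁ ∈ P.Q, ∃ q₂ ∈ P.Q, x = q₁ * a + q₂ * c}) ∨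
      ({x : K | ∃ q₁ ∈ P.Q, ∃ q₂ ∈ P.Q, ∃ q₃ ∈ P.Q, x = q₁ * a + q₂ * b + q₃ * c} =
          {x : K | ∃ q₁ ∈ P.Q, ∃ q₂ ∈ P.Q, x = q₁ * b + q₂ * c}) := by
  intro a b c
  by_cases ha : a = 0
  · right; right
    subst ha
    ext x
    simp only [Set.mem_setOf_eq]
    constructor
    · rintro ⟨q₁, h₁, q₂, h₂, q₃, h₃, rfl⟩; exact ⟨q₂, h₂, q₃, h₃, by ring⟩
    · rintro ⟨q₁, h₁, q₂, h₂, rfl⟩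
      exact ⟨0, PDV.zero_mem_Q P, q₁, h₁, q₂, h₂, by ring⟩
  by_cases hb : b = 0
  · right; left
    subst hb
    ext x
    simp only [Set.mem_setOf_eq]
    constructor
    · rintro ⟨q₁, h₁, q₂, h₂, q₃, h₃, rfl⟩; exact ⟨q₁, h₁, q₃, h₃, by ring⟩
    · rintro ⟨q₁, h₁, q₂, h₂, rfl⟩
      exact ⟨q₁, h₁, 0, PDV.zero_mem_Q P, q₂, h₂, by ring⟩
  by_cases hc : c = 0
  · left
    subst hc
    ext x
    simp only [Set.mem_setOf_eq]
    constructor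
    · rintro ⟨q₁, h₁, q₂, h₂, q₃, h₃, rfl⟩; exact ⟨q₁, h₁, q₂, h₂, by ring⟩
    · rintro ⟨q₁, h₁, q₂, h₂, rfl⟩
      exact ⟨q₁, h₁, q₂, h₂, 0, PDV.zero_mem_Q P, by ring⟩
  rcases le_total (P.v a) (P.v b) with hab | hab
  · rcases le_total (P.v a) (P.v c) with hac | hac
    · -- a has minimal valuation
      have htO := PDV.div_mem_O P ha hb hab
      have hsO := PDV.div_mem_O P ha hc hac
      rcases PDV.key P hdense htO hsO with ⟨q, hq, q', hq', h⟩ | ⟨q, hq, q', hq', h⟩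
      · left
        exact PDV.span_drop P hq hq' (PDV.mul_out ha h)
      · right; left
        have hb2 := PDV.mul_out ha h
        have hb' : b = q' * c + q * a := by linear_combination hb2
        rw [PDV.span_perm P a b c, PDV.span_perm P b c a,
          PDV.span_drop P hq' hq hb', PDV.span_swap P c a]
    · -- c has minimal valuation
      have htO := PDV.div_mem_O P hc ha hac
      have hsO := PDV.div_mem_O P hc hb (le_trans hac hab)
      rcases PDV.key P hdense htO hsO with ⟨q, hq, q', hq', h⟩ | ⟨q, hq, q', hq', h⟩
      · right; left
        have hb' := PDV.mul_out hc h
        rw [PDV.span_perm P a b c, PDV.span_perm P b c a,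
          PDV.span_drop P hq hq' hb', PDV.span_swap P c a]
      · right; right
        have ha2 := PDV.mul_out hc h
        have ha' : a = q' * b + q * c := by linear_combination ha2
        rw [PDV.span_perm P a b c, PDV.span_drop P hq' hq ha']
  · rcases le_total (P.v b) (P.v c) with hbc | hbc
    · -- b has minimal valuation
      have htO := PDV.div_mem_O P hb ha hab
      have hsO := PDV.div_mem_O P hb hc hbc
      rcases PDV.key P hdense htO hsO with ⟨q, hq, q', hq', h⟩ | ⟨q, hq, q', hq', h⟩
      · left
        have hc2 := PDV.mul_out hb h
        have hc' : c = q' * a + q * b := by linear_combination hc2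
        exact PDV.span_drop P hq' hq hc'
      · right; right
        have ha2 := PDV.mul_out hb h
        rw [PDV.span_perm P a b c, PDV.span_drop P hq hq' ha2]
    · -- c has minimal valuation
      have htO := PDV.div_mem_O P hc ha (le_trans hbc hab)
      have hsO := PDV.div_mem_O P hc hb hbc
      rcases PDV.key P hdense htO hsO with ⟨q, hq, q', hq', h⟩ | ⟨q, hq, q', hq', h⟩
      · right; left
        have hb' := PDV.mul_out hc h
        rw [PDV.span_perm P a b c, PDV.span_perm P b c a,
          PDV.span_drop P hq hq' hb', PDV.span_swap P c a]
      · right; right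
        have ha2 := PDV.mul_out hc h
        have ha' : a = q' * b + q * c := by linear_combination ha2
        rw [PDV.span_perm P a b c, PDV.span_drop P hq' hq ha']
end

section
/- Assume the pre-diffeo-valued field structure is dense, and set I := Q ∩ M. Then: (1) the residue map res restricts to a surjective ring homomorphism Q → k with kernel I, inducing a ring isomorphism Q/I ≅ k; and (2) the map gres : R → k × k defined by gres(a) = (res(a), d(a)) is a surjective Q-module homomorphism with kernel I (where k × k is a Q-module via res acting coordinatewise), inducing a Q-module isomorphism R/I ≅ k². -/
/-- Assume the pre-diffeo-valued field structure is dense and set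
`I := Q ∩ M`.  Then (1) `res` restricts to a surjective ring homomorphism `Q → k` with
kernel `I` (inducing a ring isomorphism `Q/I ≅ k`), and (2) the map
`gres : R → k × k`, `gres a = (res a, d a)` is a surjective `Q`-module homomorphism with
kernel `I` (inducing a `Q`-module isomorphism `R/I ≅ k²`). -/
theorem res_and_gres_surjective_with_kernel_I
    {p : ℕ} (hp : p.Prime) {K : Type*} [Field K] [CharP K p]
    {Γ : Type*} [AddCommGroup Γ] [LinearOrder Γ] [IsOrderedAddMonoid Γ]
    {k : Type*} [Field k] {D : Type*} [AddCommGroup D]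
    (P : PreDiffeoValued p K Γ k D)
    (hdense : P.IsDense) :
    -- (1) `res|_Q : Q → k` is surjective with kernel `I = Q ∩ M`
    ((∀ z : k, ∃ q ∈ P.Q, P.res q = z) ∧
      (∀ q ∈ P.Q, (P.res q = 0 ↔ q ∈ P.Q ∩ {x : K | 0 < P.v x}))) ∧
    -- (2) `gres : R → k × k`, `a ↦ (res a, d a)`, is a surjective `Q`-module
    -- homomorphism with kernel `I = Q ∩ M`
    ((∀ q ∈ P.Q, ∀ r ∈ P.R,
        P.res (q * r) = P.res q * P.res r ∧ P.d (q * r) = P.res q * P.d r) ∧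
      (∀ z w : k, ∃ r ∈ P.R, P.res r = z ∧ P.d r = w) ∧
      (∀ r ∈ P.R, ((P.res r, P.d r) = ((0 : k), (0 : k)) ↔
        r ∈ P.Q ∩ {x : K | 0 < P.v x}))) := by
  -- basic memberships
  have hRO : ∀ x ∈ P.R, x ∈ P.O := fun x hx => P.R_le_O hx
  -- (1a) res restricted to Q is surjective
  have resQ_surj : ∀ z : k, ∃ q ∈ P.Q, P.res q = z := by
    intro z
    obtain ⟨x, hxO, hxz⟩ := P.res_surjective z
    obtain ⟨q, hqQ, hv⟩ := hdense x hxO (0 : Γ)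
    refine ⟨q, hqQ, ?_⟩
    have hqO : q ∈ P.O := hRO q hqQ.1
    have hxqO : x - q ∈ P.O := by
      rw [P.mem_O_iff]
      exact le_of_lt (by simpa using hv)
    have hres0 : P.res (x - q) = 0 := by
      rw [P.res_eq_zero_iff _ hxqO]
      simpa using hv
    have : P.res x = P.res q + P.res (x - q) := by
      have := P.res_add q hqO (x - q) hxqO
      simpa using this
    rw [hres0, add_zero] at this
    rw [← this, hxz]
  refine ⟨⟨resQ_surj, ?_⟩, ?_, ?_, ?_⟩
  · -- (1b) kernel of res|Q is I
    intro q hq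
    have hqO : q ∈ P.O := hRO q hq.1
    rw [P.res_eq_zero_iff q hqO]
    exact ⟨fun h => ⟨hq, h⟩, fun h => h.2⟩
  · -- (2a) gres is a Q-module homomorphism
    intro q hq r hr
    have hqO : q ∈ P.O := hRO q hq.1
    have hrO : r ∈ P.O := hRO r hr
    constructor
    · exact P.res_mul q hqO r hrO
    · rw [P.d_leibniz q hq.1 r hr, hq.2, mul_zero, add_zero]
  · -- (2b) gres is surjective
    intro z w
    obtain ⟨r₀, hr₀R, hr₀d⟩ := P.d_surjective w
    obtain ⟨q, hqQ, hqres⟩ := resQ_surj (z - P.res r₀)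
    refine ⟨r₀ + q, P.R.add_mem hr₀R hqQ.1, ?_, ?_⟩
    · rw [P.res_add r₀ (hRO r₀ hr₀R) q (hRO q hqQ.1), hqres]
      ring
    · rw [P.d_add r₀ hr₀R q hqQ.1, hqQ.2, hr₀d, add_zero]
  · -- (2c) kernel of gres is I
    intro r hr
    constructor
    · intro h
      have h1 : P.res r = 0 := congrArg Prod.fst h
      have h2 : P.d r = 0 := congrArg Prod.snd h
      exact ⟨⟨hr, h2⟩, (P.res_eq_zero_iff r (hRO r hr)).1 h1⟩
    · intro ⟨hQ, hM⟩
      have : P.res r = 0 := (P.res_eq_zero_iff r (hRO r hr)).2 hM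
      rw [this, hQ.2]
end

section
/- Assume the pre-diffeo-valued field structure is dense. Then for every a ∈ O with v(a) = 0 (i.e. a a unit of O), one has val(π(a)) = val(π(a⁻¹)). -/
/-- If the pre-diffeo-valued field structure is dense, then for every
unit `a` of `O` (i.e. `a ∈ O` with `v a = 0`) one has `val (π a) = val (π a⁻¹)`. -/
theorem val_pi_inv_eq_val_pi
    {p : ℕ} (hp : p.Prime) {K : Type*} [Field K] [CharP K p]
    {Γ : Type*} [AddCommGroup Γ] [LinearOrder Γ] [IsOrderedAddMonoid Γ]
    {k : Type*} [Field k] {D : Type*} [AddCommGroup D]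
    (P : PreDiffeoValuedS p K Γ k D)
    (hdense : P.toPreDiffeoValued.IsDense) :
    ∀ a ∈ P.O, P.v a = 0 → P.val (P.pi a) = P.val (P.pi a⁻¹) := by
  -- `v 1 = 0`
  have hv1 : P.v 1 = 0 := by
    have hne : P.v 1 ≠ ⊤ := fun h => one_ne_zero ((P.v_eq_top_iff 1).mp h)
    have hm := P.v_mul 1 1
    rw [one_mul] at hm
    lift P.v 1 to Γ using hne with γ hγ
    have hγγ : γ = γ + γ := by exact_mod_cast hm
    have : γ = 0 := add_eq_right.mp hγγ.symm
    exact_mod_cast this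
  -- `smul 0 x = 0`
  have hsmul0 : ∀ x : D, P.smul 0 x = 0 := by
    intro x
    have h := P.add_smul 0 P.O.zero_mem 0 P.O.zero_mem x
    rw [add_zero] at h
    exact left_eq_add.mp h
  -- `smul a 0 = 0` for `a ∈ O`
  have hsmula0 : ∀ a ∈ P.O, P.smul a 0 = 0 := by
    intro a ha
    have h := P.smul_add a ha 0 0
    rw [add_zero] at h
    exact left_eq_add.mp h
  -- key: multiplying by a unit preserves `val`
  have key : ∀ a ∈ P.O, P.v a = 0 → ∀ x : D, P.val (P.smul a x) = P.val x := by
    intro a ha hva x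
    rcases P.val_nonpos_or_top x with hx | hx
    · have : P.v a + P.val x ≤ 0 := by rw [hva, zero_add]; exact hx
      rw [P.val_smul_of_nonpos a ha x this, hva, zero_add]
    · have hx0 : x = 0 := (P.val_eq_top_iff x).mp hx
      rw [hx0, hsmula0 a ha]
  intro a ha hva
  have ha0 : a ≠ 0 := by
    intro h
    rw [h] at hva
    have : P.v 0 = ⊤ := (P.v_eq_top_iff 0).mpr rfl
    rw [this] at hva; exact (by simp : (⊤ : WithTop Γ) ≠ 0) hva
  have hvainv : P.v a⁻¹ = 0 := by
    have hm := P.v_mul a a⁻¹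
    rw [mul_inv_cancel₀ ha0, hv1, hva, zero_add] at hm
    exact hm.symm
  have hainv : a⁻¹ ∈ P.O := (P.mem_O_iff a⁻¹).mpr (le_of_eq hvainv.symm)
  by_cases hp2 : p = 2
  · -- char 2: use a² ∈ Q
    obtain ⟨hsqR, hdsq⟩ := P.char_two_sq hp2 a ha
    have hsqO : a ^ 2 ∈ P.O := by
      have : a * a ∈ P.O := P.O.mul_mem ha ha
      rwa [sq]
    have hvsq : P.v (a ^ 2) = 0 := by
      rw [sq, P.v_mul, hva, zero_add]
    have heq : a ^ 2 * a⁻¹ = a := by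
      field_simp
    have h := P.pi_qsmul (a ^ 2) hsqR hdsq a⁻¹ hainv
    rw [heq] at h
    rw [h, key (a ^ 2) hsqO hvsq]
  · -- odd char: Leibniz rule
    have h := P.char_odd_pi hp2 a ha a⁻¹ hainv
    rw [mul_inv_cancel₀ ha0] at h
    -- π 1 = 0
    have hd1 : P.d 1 = 0 := by
      have hl := P.d_leibniz 1 P.R.one_mem 1 P.R.one_mem
      rw [mul_one, P.res_one, one_mul] at hl
      exact left_eq_add.mp hl
    have hphi0 : P.phi 0 = 0 := by
      have := P.phi_add 0 0
      rw [add_zero] at this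
      exact left_eq_add.mp this
    have hpi1 : P.pi 1 = 0 := by
      rw [P.pi_eq_phi_d 1 P.R.one_mem, hd1, hphi0]
    rw [hpi1] at h
    have hneg : P.smul a (P.pi a⁻¹) = - P.smul a⁻¹ (P.pi a) := by
      exact eq_neg_of_add_eq_zero_left h.symm
    -- val of negation
    have hvm1 : P.v (-1 : K) = 0 := by
      have hne : P.v (-1 : K) ≠ ⊤ := fun h' =>
        (by norm_num : (-1 : K) ≠ 0) ((P.v_eq_top_iff _).mp h')
      have hm := P.v_mul (-1 : K) (-1 : K)
      rw [neg_mul_neg, one_mul, hv1] at hm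
      lift P.v (-1 : K) to Γ using hne with γ hγ
      have hγγ : γ + γ = (0 : Γ) := by exact_mod_cast hm.symm
      have : γ = 0 := by
        rcases lt_trichotomy γ 0 with hlt | h0 | hgt
        · exfalso
          have h2 := add_lt_add hlt hlt
          rw [hγγ, add_zero] at h2
          exact lt_irrefl _ h2
        · exact h0
        · exfalso
          have h2 := add_lt_add hgt hgt
          rw [hγγ, add_zero] at h2
          exact lt_irrefl _ h2
      exact_mod_cast this
    have hm1O : (-1 : K) ∈ P.O := P.O.neg_mem P.O.one_mem
    have hsmulneg : ∀ y : D, P.smul (-1 : K) y = -y := by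
      intro y
      have h' := P.add_smul 1 P.O.one_mem (-1) hm1O y
      rw [add_neg_cancel, hsmul0, P.one_smul] at h'
      exact (neg_eq_of_add_eq_zero_right h'.symm).symm
    have : P.val (P.pi a⁻¹) = P.val (P.pi a) := by
      rw [← key a ha hva, hneg, ← hsmulneg, key (-1) hm1O hvm1,
        key a⁻¹ hainv hvainv]
    exact this.symm
end

section
/- Every element q of K that is algebraic over the prime field F_p belongs to Q; in particular O, R and Q all contain the relative algebraic closure k₀ = {q ∈ K : q is algebraic over F_p} of F_p in K, and are thus k₀-algebras. -/
lemma exists_pow_pow_eq_self {p : ℕ} (hp : p.Prime) {K : Type*} [Field K] [CharP K p]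
    (q : K) (h : AlgebraicOverPrime p q) :
    ∃ n : ℕ, 0 < n ∧ q ^ p ^ n = q := by
  haveI : Fact p.Prime := ⟨hp⟩
  letI : Algebra (ZMod p) K := (ZMod.castHom dvd_rfl K).toAlgebra
  obtain ⟨f, hf0, hf⟩ := h
  have halg : IsAlgebraic (ZMod p) q := ⟨f, hf0, by rwa [Polynomial.aeval_def]⟩
  have hint : IsIntegral (ZMod p) q := halg.isIntegral
  set A := Algebra.adjoin (ZMod p) ({q} : Set K) with hA
  haveI : Module.Finite (ZMod p) A := Module.Finite.iff_fg.mpr hint.fg_adjoin_singleton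
  haveI : Finite A := Module.finite_of_finite (ZMod p)
  haveI : Fintype A := Fintype.ofFinite A
  letI : Field A := (Finite.isField_of_domain A).toField
  haveI : CharP A p := CharP.subring' K p A.toSubring
  obtain ⟨n, -, hcard⟩ := FiniteField.card A p
  have hq : (⟨q, Algebra.self_mem_adjoin_singleton _ q⟩ : A) ^ Fintype.card A
      = ⟨q, Algebra.self_mem_adjoin_singleton _ q⟩ := FiniteField.pow_card _
  refine ⟨n, n.2, ?_⟩
  rw [hcard] at hq
  have := congrArg (Subtype.val) hq
  push_cast at this
  exact_mod_cast this

/-- Every element `q` of `K` that is algebraic over the prime field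
`𝔽_p` belongs to `Q`; in particular `O`, `R` and `Q` all contain the relative algebraic
closure `k₀` of `𝔽_p` in `K` (and are thus `k₀`-algebras). -/
theorem algebraicOverPrime_mem_Q
    {p : ℕ} (hp : p.Prime) {K : Type*} [Field K] [CharP K p]
    {Γ : Type*} [AddCommGroup Γ] [LinearOrder Γ] [IsOrderedAddMonoid Γ]
    {k : Type*} [Field k] {D : Type*} [AddCommGroup D]
    (P : PreDiffeoValued p K Γ k D) :
    ∀ q : K, AlgebraicOverPrime p q → q ∈ P.O ∧ q ∈ P.R ∧ q ∈ P.Q := by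
  intro q halg
  obtain ⟨n, hn, hqn⟩ := exists_pow_pow_eq_self hp q halg
  -- basic facts
  have hO0 : (0 : K) ∈ P.O := P.O.zero_mem
  have smul_zero_left : ∀ x : D, P.smul 0 x = 0 := by
    intro x
    have h := P.add_smul 0 hO0 0 hO0 x
    rw [add_zero] at h
    exact right_eq_add.mp h
  -- step 1 : q ∈ O
  have hqO : q ∈ P.O := by
    rcases eq_or_ne q 0 with rfl | hq0
    · exact hO0
    · obtain ⟨γ, hγ⟩ : ∃ γ : Γ, P.v q = (γ : WithTop Γ) := by
        rcases Option.ne_none_iff_exists'.mp (fun h => hq0 ((P.v_eq_top_iff q).mp h)) with ⟨γ, hγ⟩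
        exact ⟨γ, hγ⟩
      have vpow : ∀ m : ℕ, P.v (q ^ m) = ((m • γ : Γ) : WithTop Γ) := by
        intro m
        induction m with
        | zero =>
          have h1 : P.v 1 = P.v 1 + P.v 1 := by
            have := P.v_mul 1 1
            rwa [one_mul] at this
          obtain ⟨δ, hδ⟩ : ∃ δ : Γ, P.v 1 = (δ : WithTop Γ) := by
            rcases Option.ne_none_iff_exists'.mp
              (fun h => one_ne_zero ((P.v_eq_top_iff 1).mp h)) with ⟨δ, hδ⟩
            exact ⟨δ, hδ⟩
          rw [hδ] at h1
          have hδ' : δ = δ + δ := by exact_mod_cast h1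
          have hδ0 : δ = 0 := right_eq_add.mp hδ'
          simp [pow_zero, hδ, hδ0]
        | succ m ih =>
          have hvm := P.v_mul (q ^ m) q
          rw [← pow_succ] at hvm
          rw [hvm, ih, hγ, succ_nsmul]
          exact_mod_cast rfl
      have h1 : P.v q = ((1 • γ : Γ) : WithTop Γ) := by simpa using hγ
      have hsm : ((p ^ n • γ : Γ) : WithTop Γ) = ((1 • γ : Γ) : WithTop Γ) := by
        rw [← vpow, hqn, h1]
      have hsm' : p ^ n • γ = 1 • γ := by exact_mod_cast hsm
      have h2 : 2 ≤ p ^ n := by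
        have := Nat.one_lt_pow (by omega : n ≠ 0) hp.one_lt
        omega
      obtain ⟨t, ht⟩ : ∃ t : ℕ, p ^ n = t + 1 := ⟨p ^ n - 1, by omega⟩
      have ht0 : t ≠ 0 := by omega
      rw [ht, succ_nsmul, one_smul] at hsm'
      have htγ : t • γ = 0 := by
        have h' : t • γ + γ = 0 + γ := by rw [zero_add]; exact hsm'
        exact add_right_cancel h'
      have hγ0 : γ = 0 := (nsmul_eq_zero_iff.mp htγ).resolve_right ht0
      rw [P.mem_O_iff, hγ, hγ0]
      exact le_refl _
  -- step 2 : π q = 0, hence q ∈ R and d q = 0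
  have hRd : q ∈ P.R ∧ P.d q = 0 := by
    rcases eq_or_ne p 2 with hp2 | hp2
    · -- characteristic 2 : q is a square
      obtain ⟨t, ht⟩ : ∃ t : ℕ, p ^ n = t * 2 := ⟨p ^ (n - 1), by
        rw [← hp2, ← pow_succ]
        congr 1
        omega⟩
      have hsq : q = (q ^ t) ^ 2 := by rw [← pow_mul, ← ht, hqn]
      have := P.char_two_sq hp2 (q ^ t) (P.O.pow_mem hqO t)
      rwa [← hsq] at this
    · -- odd characteristic : π is a derivation
      have pi_pow : ∀ m : ℕ,
          P.pi (q ^ (m + 1)) = P.smul (((m + 1 : ℕ) : K) * q ^ m) (P.pi q) := by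
        intro m
        induction m with
        | zero => simp [P.one_smul]
        | succ m ih =>
          have hc : (((m + 1 : ℕ) : K) * q ^ m) ∈ P.O :=
            P.O.mul_mem (natCast_mem P.O _) (P.O.pow_mem hqO m)
          have hqm1 : q ^ (m + 1) ∈ P.O := P.O.pow_mem hqO (m + 1)
          have h1 : P.pi (q ^ (m + 1) * q)
              = P.smul (q ^ (m + 1)) (P.pi q) + P.smul q (P.pi (q ^ (m + 1))) :=
            P.char_odd_pi hp2 _ hqm1 _ hqO
          rw [← pow_succ] at h1
          rw [h1, ih, ← P.mul_smul q hqO _ hc, ← P.add_smul _ hqm1 _ (P.O.mul_mem hqO hc)]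
          congr 1
          push_cast
          ring
      obtain ⟨t, ht⟩ : ∃ t : ℕ, p ^ n = t + 1 :=
        ⟨p ^ n - 1, by have := Nat.one_le_pow n p hp.pos; omega⟩
      have hπ : P.pi q = P.smul (((t + 1 : ℕ) : K) * q ^ t) (P.pi q) := by
        conv_lhs => rw [← hqn, ht]
        exact pi_pow t
      have hcast : ((t + 1 : ℕ) : K) = 0 := by
        rw [← ht]
        push_cast
        rw [CharP.cast_eq_zero K p]
        exact zero_pow (by omega)
      rw [hcast, zero_mul, smul_zero_left] at hπ
      exact (P.pi_eq_zero_iff q hqO).mp hπ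
  exact ⟨hqO, hRd.1, hRd⟩
end
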